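/- arXiv:1709.00778 — 2 statements merged into one kernel-verified Lean document; each statement's English description precedes it below -/
import Mathlib

section
/- Let r be a positive integer and n ≥ 1 with d_2(n) > 0. Then v_2(A^r_n) ≥ r − u_2(r) + n − 1 − r · d_2(n), as an inequality of integers, where v_2 denotes the 2-adic valuation; that is, A^r_n contains at least r − u_2(r) + n − 1 − r·d_2(n) factors of 2. -/
/-- The descent set of a permutation `π` of `{1,…,n}` (realized as `Equiv.Perm (Fin n)`),
as a subset of `[n-1] = {1,…,n-1}`: those positions `i` with `π_i > π_{i+1}`. -/
def descSet (n : ℕ) (π : Equiv.Perm (Fin n)) : Finset ℕ :=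
  (Finset.Icc 1 (n - 1)).filter fun i =>
    ∀ (h1 : i - 1 < n) (h2 : i < n), π ⟨i, h2⟩ < π ⟨i - 1, h1⟩

/-- The descent set statistic `β_n(S)`: the number of permutations of `{1,…,n}`
with descent set exactly `S`. -/
def descStat (n : ℕ) (S : Finset ℕ) : ℕ :=
  (Finset.univ.filter fun π : Equiv.Perm (Fin n) => descSet n π = S).card

/-- `A^r_n = Σ_{S ⊆ [n-1]} β_n(S)^r`. -/
def powSumDes (r n : ℕ) : ℕ :=
  ∑ S ∈ (Finset.Icc 1 (n - 1)).powerset, descStat n S ^ r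

/-- `u_p(m)`, the sum of the digits of `m` in base `p`. -/
def digitSum (p m : ℕ) : ℕ := (Nat.digits p m).sum

/-- `d_p(m) = u_p(m) - 1`, the depth of `m` in base `p`. -/
def depth (p m : ℕ) : ℕ := digitSum p m - 1

namespace Stmt16

open Finset
open scoped Nat

/-- number of permutations whose descent set is contained in `V` -/
def alphaCount (n : ℕ) (V : Finset ℕ) : ℕ :=
  (Finset.univ.filter fun π : Equiv.Perm (Fin n) => descSet n π ⊆ V).card

lemma mem_descSet_iff {n i : ℕ} {π : Equiv.Perm (Fin n)} :
    i ∈ descSet n π ↔ 1 ≤ i ∧ i ≤ n - 1 ∧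
      ∃ (h1 : i - 1 < n) (h2 : i < n), π ⟨i, h2⟩ < π ⟨i - 1, h1⟩ := by
  unfold descSet
  simp only [Finset.mem_filter, Finset.mem_Icc]
  constructor
  · rintro ⟨⟨h1, h2⟩, h⟩
    have hn : 2 ≤ n := by omega
    exact ⟨h1, h2, by omega, by omega, h (by omega) (by omega)⟩
  · rintro ⟨h1, h2, _, _, h⟩
    exact ⟨⟨h1, h2⟩, fun _ _ => h⟩

lemma descSet_subset_iff {n : ℕ} (π : Equiv.Perm (Fin n)) (V : Finset ℕ) :
    descSet n π ⊆ V ↔ ∀ i : ℕ, ∀ h2 : i < n, 1 ≤ i → i ∉ V →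
      π ⟨i - 1, by omega⟩ < π ⟨i, h2⟩ := by
  constructor
  · intro h i h2 h1 hiV
    rcases lt_trichotomy (π ⟨i, h2⟩) (π ⟨i - 1, by omega⟩) with hlt | heq | hgt
    · exact absurd (h (mem_descSet_iff.mpr ⟨h1, by omega, by omega, h2, hlt⟩)) hiV
    · exfalso
      have := π.injective heq
      have : i = i - 1 := congrArg Fin.val this
      omega
    · exact hgt
  · intro h i hi
    obtain ⟨h1, hle, _, h2, hlt⟩ := mem_descSet_iff.mp hi
    by_contra hiV
    exact absurd hlt (not_lt.mpr (le_of_lt (h i h2 h1 hiV)))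

lemma descSet_subset_empty_iff {n : ℕ} (π : Equiv.Perm (Fin n)) :
    descSet n π ⊆ (∅ : Finset ℕ) ↔ π = 1 := by
  constructor
  · intro h
    rcases Nat.eq_zero_or_pos n with rfl | hn
    · exact Equiv.ext fun x => x.elim0
    obtain ⟨m, rfl⟩ : ∃ m, n = m + 1 := ⟨n - 1, by omega⟩
    have hmono : StrictMono π := by
      rw [Fin.strictMono_iff_lt_succ]
      intro i
      have h2 : (i : ℕ) + 1 < m + 1 := by omega
      have := (descSet_subset_iff π ∅).mp h (i + 1) h2 (by omega) (Finset.notMem_empty _)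
      have e1 : (⟨(i : ℕ) + 1 - 1, by omega⟩ : Fin (m + 1)) = Fin.castSucc i := by
        apply Fin.ext; simp
      have e2 : (⟨(i : ℕ) + 1, h2⟩ : Fin (m + 1)) = i.succ := by
        apply Fin.ext; simp
      rwa [e1, e2] at this
    have hcard : (Finset.univ : Finset (Fin (m + 1))).card = m + 1 := by simp
    have h1 : (π : Fin (m + 1) → Fin (m + 1)) = Finset.univ.orderEmbOfFin hcard :=
      Finset.orderEmbOfFin_unique _ (fun x => Finset.mem_univ _) hmono
    have h2 : (id : Fin (m + 1) → Fin (m + 1)) = Finset.univ.orderEmbOfFin hcard :=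
      Finset.orderEmbOfFin_unique _ (fun x => Finset.mem_univ _) strictMono_id
    exact Equiv.ext fun x => by
      have := congrFun (h1.trans h2.symm) x
      simpa using this
  · rintro rfl i hi
    obtain ⟨h1, _, _, h2, hlt⟩ := mem_descSet_iff.mp hi
    simp only [Equiv.Perm.one_apply] at hlt
    rw [Fin.lt_def] at hlt
    simp at hlt
    omega

lemma alphaCount_empty {n : ℕ} : alphaCount n ∅ = 1 := by
  unfold alphaCount
  have : (Finset.univ.filter fun π : Equiv.Perm (Fin n) => descSet n π ⊆ ∅) = {1} := by
    ext π
    simp only [Finset.mem_filter, Finset.mem_univ, true_and, Finset.mem_singleton]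
    exact descSet_subset_empty_iff π
  rw [this, Finset.card_singleton]

lemma alphaCount_pos {n : ℕ} {V : Finset ℕ} : 0 < alphaCount n V := by
  apply Finset.card_pos.mpr
  exact ⟨1, Finset.mem_filter.mpr ⟨Finset.mem_univ _,
    ((descSet_subset_empty_iff _).mpr rfl).trans (Finset.empty_subset V)⟩⟩



lemma pi_lt_of_gap {n : ℕ} {π : Equiv.Perm (Fin n)} {V : Finset ℕ}
    (h : descSet n π ⊆ V) {a b : ℕ} (hab : a < b) (hb : b < n)
    (hgap : ∀ x, a < x → x ≤ b → x ∉ V) :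
    π ⟨a, by omega⟩ < π ⟨b, hb⟩ := by
  induction b with
  | zero => omega
  | succ c ih =>
    have hc : c < n := by omega
    have hstep : π ⟨c, hc⟩ < π ⟨c + 1, hb⟩ := by
      have := (descSet_subset_iff π V).mp h (c + 1) hb (by omega)
        (hgap (c + 1) (by omega) le_rfl)
      simp only [Nat.add_sub_cancel] at this
      exact this
    rcases Nat.lt_or_ge a c with hac | hac
    · exact lt_trans (ih hac hc (fun x hx1 hx2 => hgap x hx1 (by omega))) hstep
    · have haeq : a = c := by omega
      subst haeq; exact hstep

section Glue

variable {n v : ℕ}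

/-- glue a permutation of the first `v` positions (hitting the values in `W`)
with the increasing enumeration of `Wᶜ` on the remaining positions. -/
def glueFun (W : Finset (Fin n)) (hW : W.card = v) (π' : Equiv.Perm (Fin v))
    (j : Fin n) : Fin n :=
  if h : (j : ℕ) < v then W.orderEmbOfFin hW (π' ⟨j, h⟩)
  else Wᶜ.orderEmbOfFin (by rw [Finset.card_compl, hW, Fintype.card_fin])
    ⟨(j : ℕ) - v, by have := j.isLt; omega⟩

lemma glueFun_lt {W : Finset (Fin n)} {hW : W.card = v} {π' : Equiv.Perm (Fin v)}
    {j : Fin n} (h : (j : ℕ) < v) :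
    glueFun W hW π' j = W.orderEmbOfFin hW (π' ⟨j, h⟩) := dif_pos h

lemma glueFun_ge {W : Finset (Fin n)} {hW : W.card = v} {π' : Equiv.Perm (Fin v)}
    {j : Fin n} (h : ¬ (j : ℕ) < v) :
    glueFun W hW π' j = Wᶜ.orderEmbOfFin (by rw [Finset.card_compl, hW, Fintype.card_fin])
      ⟨(j : ℕ) - v, by have := j.isLt; omega⟩ := dif_neg h

lemma glueFun_injective (W : Finset (Fin n)) (hW : W.card = v) (π' : Equiv.Perm (Fin v)) :
    Function.Injective (glueFun W hW π') := by
  intro x y hxy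
  by_cases hx : (x : ℕ) < v <;> by_cases hy : (y : ℕ) < v
  · rw [glueFun_lt hx, glueFun_lt hy] at hxy
    have h1 := π'.injective ((W.orderEmbOfFin hW).injective hxy)
    exact Fin.ext (by have := congrArg Fin.val h1; simpa using this)
  · exfalso
    have m1 : glueFun W hW π' x ∈ W := by
      rw [glueFun_lt hx]; exact Finset.orderEmbOfFin_mem _ _ _
    have m2 : glueFun W hW π' y ∈ Wᶜ := by
      rw [glueFun_ge hy]; exact Finset.orderEmbOfFin_mem _ _ _
    rw [hxy] at m1
    exact (Finset.mem_compl.mp m2) m1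
  · exfalso
    have m1 : glueFun W hW π' y ∈ W := by
      rw [glueFun_lt hy]; exact Finset.orderEmbOfFin_mem _ _ _
    have m2 : glueFun W hW π' x ∈ Wᶜ := by
      rw [glueFun_ge hx]; exact Finset.orderEmbOfFin_mem _ _ _
    rw [hxy] at m2
    exact (Finset.mem_compl.mp m2) m1
  · rw [glueFun_ge hx, glueFun_ge hy] at hxy
    have h1 := (Wᶜ.orderEmbOfFin _).injective hxy
    have h2 : (x : ℕ) - v = (y : ℕ) - v := by
      have := congrArg Fin.val h1; simpa using this
    exact Fin.ext (by omega)

/-- the glued permutation -/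
noncomputable def gluePerm (W : Finset (Fin n)) (hW : W.card = v) (π' : Equiv.Perm (Fin v)) :
    Equiv.Perm (Fin n) :=
  Equiv.ofBijective _ (Finite.injective_iff_bijective.mp (glueFun_injective W hW π'))

lemma gluePerm_apply (W : Finset (Fin n)) (hW : W.card = v) (π' : Equiv.Perm (Fin v))
    (j : Fin n) : gluePerm W hW π' j = glueFun W hW π' j := rfl

lemma descSet_gluePerm {V : Finset ℕ} (hvV : v ∈ V)
    (W : Finset (Fin n)) (hW : W.card = v) (π' : Equiv.Perm (Fin v))
    (hπ' : descSet v π' ⊆ V.erase v) :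
    descSet n (gluePerm W hW π') ⊆ V := by
  intro i hi
  obtain ⟨h1, hle, _, h2, hlt⟩ := mem_descSet_iff.mp hi
  rcases lt_trichotomy i v with hiv | rfl | hvi
  · have hi1v : i - 1 < v := by omega
    rw [gluePerm_apply, gluePerm_apply, glueFun_lt hiv, glueFun_lt hi1v] at hlt
    have hlt' : π' ⟨i, hiv⟩ < π' ⟨i - 1, hi1v⟩ :=
      (W.orderEmbOfFin hW).lt_iff_lt.mp hlt
    have : i ∈ descSet v π' :=
      mem_descSet_iff.mpr ⟨h1, by omega, by omega, hiv, hlt'⟩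
    exact Finset.erase_subset _ _ (hπ' this)
  · exact hvV
  · exfalso
    have hg1 : ¬ (((⟨i, h2⟩ : Fin n) : ℕ) < v) := by exact (by omega : ¬ i < v)
    have hg2 : ¬ (((⟨i - 1, by omega⟩ : Fin n) : ℕ) < v) := by exact (by omega : ¬ i - 1 < v)
    rw [gluePerm_apply, gluePerm_apply, glueFun_ge hg1, glueFun_ge hg2] at hlt
    have h9 := (Wᶜ.orderEmbOfFin _).lt_iff_lt.mp hlt
    rw [Fin.mk_lt_mk] at h9
    simp only at h9
    omega

variable (hv : v ≤ n)

/-- the set of values of `π` on the first `v` positions -/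
def Wof (π : Equiv.Perm (Fin n)) : Finset (Fin n) :=
  Finset.image (fun j : Fin v => π (Fin.castLE hv j)) Finset.univ

lemma Wof_card (π : Equiv.Perm (Fin n)) : (Wof hv π).card = v := by
  have hinj : Function.Injective (fun j : Fin v => π (Fin.castLE hv j)) :=
    fun a b hab => Fin.castLE_injective hv (π.injective hab)
  rw [Wof, Finset.card_image_of_injective _ hinj]
  simp

lemma mem_Wof (π : Equiv.Perm (Fin n)) (j : Fin v) : π (Fin.castLE hv j) ∈ Wof hv π :=
  Finset.mem_image_of_mem _ (Finset.mem_univ j)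

/-- the pattern of `π` on the first `v` positions, as a permutation of `Fin v` -/
noncomputable def pof (π : Equiv.Perm (Fin n)) : Equiv.Perm (Fin v) :=
  Equiv.ofBijective
    (fun j => ((Wof hv π).orderIsoOfFin (Wof_card hv π)).symm ⟨π (Fin.castLE hv j), mem_Wof hv π j⟩)
    (Finite.injective_iff_bijective.mp (by
      intro a b hab
      have h1 := ((Wof hv π).orderIsoOfFin (Wof_card hv π)).symm.injective hab
      have h2 : π (Fin.castLE hv a) = π (Fin.castLE hv b) := congrArg Subtype.val h1
      exact Fin.castLE_injective hv (π.injective h2)))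

lemma orderEmbOfFin_pof (π : Equiv.Perm (Fin n)) (j : Fin v) :
    (Wof hv π).orderEmbOfFin (Wof_card hv π) (pof hv π j) = π (Fin.castLE hv j) := by
  have : ((Wof hv π).orderIsoOfFin (Wof_card hv π)) (pof hv π j)
      = ⟨π (Fin.castLE hv j), mem_Wof hv π j⟩ := by
    rw [pof]
    exact ((Wof hv π).orderIsoOfFin (Wof_card hv π)).apply_symm_apply _
  have h2 := congrArg Subtype.val this
  rwa [Finset.coe_orderIsoOfFin_apply] at h2

lemma descSet_pof {V : Finset ℕ} (hV : V ⊆ Finset.Icc 1 (n-1)) (hmax : ∀ x ∈ V, x ≤ v)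
    (π : Equiv.Perm (Fin n)) (hπ : descSet n π ⊆ V) :
    descSet v (pof hv π) ⊆ V.erase v := by
  intro i hi
  obtain ⟨h1, hle, _, h2, hlt⟩ := mem_descSet_iff.mp hi
  have hvpos : 1 ≤ v := by omega
  -- transfer the descent to π
  have hlt2 : π (Fin.castLE hv ⟨i, h2⟩) < π (Fin.castLE hv ⟨i - 1, by omega⟩) := by
    rw [← orderEmbOfFin_pof hv π ⟨i, h2⟩, ← orderEmbOfFin_pof hv π ⟨i - 1, by omega⟩]
    exact ((Wof hv π).orderEmbOfFin (Wof_card hv π)).lt_iff_lt.mpr hlt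
  have hin : i < n := by omega
  have hiV : i ∈ V := by
    apply hπ
    apply mem_descSet_iff.mpr
    refine ⟨h1, by omega, by omega, hin, ?_⟩
    have e1 : (⟨i, hin⟩ : Fin n) = Fin.castLE hv ⟨i, h2⟩ := Fin.ext rfl
    have e2 : (⟨i - 1, by omega⟩ : Fin n) = Fin.castLE hv ⟨i - 1, by omega⟩ := Fin.ext rfl
    rw [e1, e2]
    exact hlt2
  exact Finset.mem_erase.mpr ⟨by omega, hiV⟩

lemma gluePerm_Wof_pof {V : Finset ℕ} (hV : V ⊆ Finset.Icc 1 (n-1)) (hmax : ∀ x ∈ V, x ≤ v)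
    (π : Equiv.Perm (Fin n)) (hπ : descSet n π ⊆ V) :
    gluePerm (Wof hv π) (Wof_card hv π) (pof hv π) = π := by
  apply Equiv.ext
  intro j
  rw [gluePerm_apply]
  by_cases h : (j : ℕ) < v
  · rw [glueFun_lt h, orderEmbOfFin_pof]
    exact congrArg π (Fin.ext rfl)
  · rw [glueFun_ge h]
    -- the tail of π is the increasing enumeration of (Wof π)ᶜ
    have hcompl : ((Wof hv π)ᶜ).card = n - v := by
      rw [Finset.card_compl, Wof_card hv π, Fintype.card_fin]
    set ρ : Fin (n - v) → Fin n := fun t => π ⟨v + (t : ℕ), by have := t.isLt; omega⟩ with hρ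
    have hρmem : ∀ t, ρ t ∈ (Wof hv π)ᶜ := by
      intro t
      rw [Finset.mem_compl]
      intro hmem
      obtain ⟨j', _, hj'⟩ := Finset.mem_image.mp hmem
      have := π.injective hj'
      have h1 : (j' : ℕ) = v + (t : ℕ) := congrArg Fin.val this
      have := j'.isLt
      omega
    have hρmono : StrictMono ρ := by
      intro a b hab
      simp only [hρ]
      apply pi_lt_of_gap hπ (by omega) (by have := b.isLt; omega)
      intro x hx1 hx2 hxV
      have := hmax x hxV
      omega
    have huniq := Finset.orderEmbOfFin_unique hcompl hρmem hρmono
    have := congrFun huniq ⟨(j : ℕ) - v, by have := j.isLt; omega⟩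
    simp only [hρ] at this
    rw [← this]
    congr 1
    exact Fin.ext (by change v + ((j : ℕ) - v) = (j : ℕ); omega)

lemma Wof_gluePerm (W : Finset (Fin n)) (hW : W.card = v) (π' : Equiv.Perm (Fin v)) :
    Wof hv (gluePerm W hW π') = W := by
  ext x
  constructor
  · intro hx
    obtain ⟨j, _, hj⟩ := Finset.mem_image.mp hx
    have hlt' : ((Fin.castLE hv j : Fin n) : ℕ) < v := j.isLt
    rw [gluePerm_apply, glueFun_lt hlt'] at hj
    rw [← hj]
    exact Finset.orderEmbOfFin_mem _ _ _
  · intro hx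
    have : x ∈ Set.range (W.orderEmbOfFin hW) := by
      rw [Finset.range_orderEmbOfFin]
      exact hx
    obtain ⟨i, hi⟩ := this
    apply Finset.mem_image.mpr
    refine ⟨π'.symm i, Finset.mem_univ _, ?_⟩
    have hlt' : ((Fin.castLE hv (π'.symm i) : Fin n) : ℕ) < v := (π'.symm i).isLt
    rw [gluePerm_apply, glueFun_lt hlt']
    have e1 : (⟨((Fin.castLE hv (π'.symm i) : Fin n) : ℕ), hlt'⟩ : Fin v) = π'.symm i :=
      Fin.ext rfl
    rw [e1, Equiv.apply_symm_apply]
    exact hi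

lemma pof_gluePerm (W : Finset (Fin n)) (hW : W.card = v) (π' : Equiv.Perm (Fin v)) :
    pof hv (gluePerm W hW π') = π' := by
  apply Equiv.ext
  intro j
  have hWW : Wof hv (gluePerm W hW π') = W := Wof_gluePerm hv W hW π'
  have hemb : (W.orderEmbOfFin hW : Fin v → Fin n)
      = ((Wof hv (gluePerm W hW π')).orderEmbOfFin (Wof_card hv (gluePerm W hW π'))) := by
    apply Finset.orderEmbOfFin_unique
    · intro x; rw [hWW]; exact Finset.orderEmbOfFin_mem _ _ _
    · exact (W.orderEmbOfFin hW).strictMono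
  apply ((Wof hv (gluePerm W hW π')).orderEmbOfFin (Wof_card hv (gluePerm W hW π'))).injective
  rw [orderEmbOfFin_pof]
  have hlt' : ((Fin.castLE hv j : Fin n) : ℕ) < v := j.isLt
  rw [gluePerm_apply, glueFun_lt hlt']
  rw [← congrFun hemb (π' j)]
  exact congrArg _ (congrArg π' (Fin.ext rfl))

end Glue

lemma alphaCount_recursion {n v : ℕ} {V : Finset ℕ} (hV : V ⊆ Finset.Icc 1 (n-1))
    (hvV : v ∈ V) (hmax : ∀ x ∈ V, x ≤ v) :
    alphaCount n V = Nat.choose n v * alphaCount v (V.erase v) := by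
  have hrange : 1 ≤ v ∧ v ≤ n - 1 := by
    have := hV hvV; rw [Finset.mem_Icc] at this; exact this
  have hn : 2 ≤ n := by omega
  have hv : v ≤ n := by omega
  -- identify both sides as cardinalities of types
  have lhs : alphaCount n V = Fintype.card {π : Equiv.Perm (Fin n) // descSet n π ⊆ V} := by
    rw [alphaCount, Fintype.card_subtype]
  have rhs1 : Nat.choose n v = Fintype.card {W : Finset (Fin n) // W.card = v} := by
    rw [Fintype.card_finset_len, Fintype.card_fin]
  have rhs2 : alphaCount v (V.erase v)
      = Fintype.card {π' : Equiv.Perm (Fin v) // descSet v π' ⊆ V.erase v} := by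
    rw [alphaCount, Fintype.card_subtype]
  rw [lhs, rhs1, rhs2, ← Fintype.card_prod]
  apply Fintype.card_congr
  exact {
    toFun := fun π => ⟨⟨Wof hv π.1, Wof_card hv π.1⟩,
      ⟨pof hv π.1, descSet_pof hv hV hmax π.1 π.2⟩⟩
    invFun := fun p => ⟨gluePerm p.1.1 p.1.2 p.2.1,
      descSet_gluePerm hvV p.1.1 p.1.2 p.2.1 p.2.2⟩
    left_inv := fun π => by
      apply Subtype.ext
      exact gluePerm_Wof_pof hv hV hmax π.1 π.2
    right_inv := fun p => by
      refine Prod.ext ?_ ?_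
      · apply Subtype.ext
        exact Wof_gluePerm hv p.1.1 p.1.2 p.2.1
      · apply Subtype.ext
        exact pof_gluePerm hv p.1.1 p.1.2 p.2.1
  }



lemma digitSum_pos : ∀ {m : ℕ}, m ≠ 0 → 0 < digitSum 2 m := by
  intro m
  induction m using Nat.strong_induction_on with
  | _ m ih =>
    intro hm
    rw [digitSum, Nat.digits_def' (by norm_num : (1:ℕ) < 2) (Nat.pos_of_ne_zero hm),
      List.sum_cons]
    rcases Nat.eq_zero_or_pos (m % 2) with h | h
    · have h2 : m / 2 ≠ 0 := by omega
      have := ih (m / 2) (by omega) h2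
      rw [digitSum] at this
      omega
    · omega

lemma v2_factorial (m : ℕ) : padicValNat 2 (m !) = m - digitSum 2 m := by
  have := sub_one_mul_padicValNat_factorial (p := 2) m
  simpa [digitSum] using this

lemma digitSum_le (m : ℕ) : digitSum 2 m ≤ m := Nat.digit_sum_le 2 m

lemma v2_choose {k m : ℕ} (h : k ≤ m) :
    padicValNat 2 (m.choose k) + digitSum 2 m = digitSum 2 k + digitSum 2 (m - k) := by
  have c0 : m.choose k ≠ 0 := (Nat.choose_pos h).ne'
  have f1 : k ! ≠ 0 := Nat.factorial_ne_zero _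
  have f2 : (m - k)! ≠ 0 := Nat.factorial_ne_zero _
  have h1 : padicValNat 2 (m !)
      = padicValNat 2 (m.choose k) + padicValNat 2 (k !) + padicValNat 2 ((m - k)!) := by
    rw [← Nat.choose_mul_factorial_mul_factorial h, padicValNat.mul (mul_ne_zero c0 f1) f2,
      padicValNat.mul c0 f1]
  rw [v2_factorial, v2_factorial, v2_factorial] at h1
  have l1 := digitSum_le m
  have l2 := digitSum_le k
  have l3 := digitSum_le (m - k)
  omega

lemma alpha_v2 : ∀ n : ℕ, 1 ≤ n → ∀ V ⊆ Finset.Icc 1 (n-1),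
    V.card + 1 ≤ padicValNat 2 (alphaCount n V) + digitSum 2 n := by
  intro n
  induction n using Nat.strong_induction_on with
  | _ n ih =>
    intro hn V hV
    rcases V.eq_empty_or_nonempty with rfl | hne
    · rw [alphaCount_empty]
      have := digitSum_pos (show n ≠ 0 by omega)
      simp only [Finset.card_empty, padicValNat.one]
      omega
    · have hvV : V.max' hne ∈ V := V.max'_mem hne
      set v := V.max' hne with hvdef
      have hmax : ∀ x ∈ V, x ≤ v := fun x hx => V.le_max' x hx
      have hbounds := hV hvV
      rw [Finset.mem_Icc] at hbounds
      have hrec := alphaCount_recursion hV hvV hmax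
      have hVsub : V.erase v ⊆ Finset.Icc 1 (v - 1) := by
        intro x hx
        obtain ⟨hxv, hxV⟩ := Finset.mem_erase.mp hx
        have h1 := hV hxV
        rw [Finset.mem_Icc] at h1
        rw [Finset.mem_Icc]
        exact ⟨h1.1, by have := hmax x hxV; omega⟩
      have hIH := ih v (by omega) (by omega) (V.erase v) hVsub
      have hchoose := v2_choose (show v ≤ n by omega)
      have hmul : padicValNat 2 (alphaCount n V)
          = padicValNat 2 (Nat.choose n v) + padicValNat 2 (alphaCount v (V.erase v)) := by
        rw [hrec, padicValNat.mul (Nat.choose_pos (by omega)).ne' alphaCount_pos.ne']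
      have hcard : (V.erase v).card = V.card - 1 := Finset.card_erase_of_mem hvV
      have hVpos : 1 ≤ V.card := Finset.card_pos.mpr hne
      have hd1 := digitSum_pos (show n - v ≠ 0 by omega)
      omega

lemma alpha_dvd {n : ℕ} (hn : 1 ≤ n) {V : Finset ℕ} (hV : V ⊆ Finset.Icc 1 (n-1)) :
    (2:ℤ) ^ V.card ∣ 2 ^ depth 2 n * (alphaCount n V : ℤ) := by
  have h1 := alpha_v2 n hn V hV
  have hu := digitSum_pos (show n ≠ 0 by omega)
  have hnat : (2:ℕ) ^ V.card ∣ 2 ^ depth 2 n * alphaCount n V := by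
    have hle : V.card ≤ padicValNat 2 (2 ^ depth 2 n * alphaCount n V) := by
      rw [padicValNat.mul (pow_ne_zero _ two_ne_zero) alphaCount_pos.ne',
        padicValNat.prime_pow]
      unfold depth
      omega
    exact (padicValNat_dvd_iff_le
      (mul_ne_zero (pow_ne_zero _ two_ne_zero) alphaCount_pos.ne')).mpr hle
  exact_mod_cast hnat

lemma sum_powerset_pow (z : ℤ) (X : Finset ℕ) :
    ∑ T ∈ X.powerset, z ^ T.card = (1 + z) ^ X.card := by
  induction X using Finset.induction_on with
  | empty => simp
  | insert a s ha ih =>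
    rw [Finset.sum_powerset_insert ha]
    have hstep : ∀ t ∈ s.powerset, z ^ (insert a t).card = z * z ^ t.card := by
      intro t ht
      rw [Finset.card_insert_of_notMem (fun hm => ha (Finset.mem_powerset.mp ht hm))]
      ring
    rw [Finset.sum_congr rfl hstep, ← Finset.mul_sum, ih,
      Finset.card_insert_of_notMem ha]
    ring

lemma powerset_sum_swap (S : Finset ℕ) (F : Finset ℕ → Finset ℕ → ℤ) :
    ∑ T ∈ S.powerset, ∑ V ∈ T.powerset, F V T
      = ∑ V ∈ S.powerset, ∑ U ∈ (S \ V).powerset, F V (V ∪ U) := by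
  rw [Finset.sum_sigma', Finset.sum_sigma']
  apply Finset.sum_nbij' (i := fun p => (⟨p.2, p.1 \ p.2⟩ : Σ _ : Finset ℕ, Finset ℕ))
    (j := fun p => (⟨p.1 ∪ p.2, p.1⟩ : Σ _ : Finset ℕ, Finset ℕ))
  · intro p hp
    rw [Finset.mem_sigma] at hp ⊢
    obtain ⟨h1, h2⟩ := hp
    rw [Finset.mem_powerset] at h1 h2 ⊢
    rw [Finset.mem_powerset]
    exact ⟨h2.trans h1, Finset.sdiff_subset_sdiff h1 le_rfl⟩
  · intro p hp
    rw [Finset.mem_sigma] at hp ⊢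
    obtain ⟨h1, h2⟩ := hp
    rw [Finset.mem_powerset] at h1 h2 ⊢
    rw [Finset.mem_powerset]
    constructor
    · exact Finset.union_subset h1 (h2.trans (Finset.sdiff_subset))
    · exact Finset.subset_union_left
  · intro p hp
    rw [Finset.mem_sigma] at hp
    obtain ⟨h1, h2⟩ := hp
    rw [Finset.mem_powerset] at h1 h2
    exact Sigma.ext (Finset.union_sdiff_of_subset h2) (heq_of_eq rfl)
  · intro p hp
    rw [Finset.mem_sigma] at hp
    obtain ⟨h1, h2⟩ := hp
    rw [Finset.mem_powerset] at h1 h2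
    refine Sigma.ext rfl (heq_of_eq ?_)
    exact Finset.union_sdiff_cancel_left (Finset.disjoint_sdiff.mono_right h2)
  · intro p hp
    rw [Finset.mem_sigma] at hp
    obtain ⟨h1, h2⟩ := hp
    rw [Finset.mem_powerset] at h1 h2
    rw [Finset.union_sdiff_of_subset h2]

lemma alpha_eq_sum_beta (n : ℕ) (V : Finset ℕ) :
    alphaCount n V = ∑ U ∈ V.powerset, descStat n U := by
  rw [alphaCount,
    Finset.card_eq_sum_card_fiberwise (f := fun π => descSet n π) (t := V.powerset)
      (fun π hπ => Finset.mem_powerset.mpr (Finset.mem_filter.mp hπ).2)]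
  apply Finset.sum_congr rfl
  intro U hU
  rw [descStat, Finset.filter_filter]
  congr 1
  apply Finset.filter_congr
  intro π _
  constructor
  · rintro ⟨h1, h2⟩; exact h2
  · intro h
    refine ⟨?_, h⟩
    show descSet n π ⊆ V
    rw [h]
    exact Finset.mem_powerset.mp hU

/-- the multilinear coefficients of `β` as a function of the indicator of `S` -/
def cInt (n : ℕ) (T : Finset ℕ) : ℤ :=
  ∑ V ∈ T.powerset, (-2) ^ (T.card - V.card) * alphaCount n V

lemma neg_one_pow_sub {a b : ℕ} (h : b ≤ a) :
    (-1 : ℤ) ^ (a - b) = (-1) ^ a * (-1) ^ b := by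
  conv_rhs => rw [show a = (a - b) + b from (Nat.sub_add_cancel h).symm]
  rw [pow_add, mul_assoc, ← pow_add]
  have h2 : (-1 : ℤ) ^ (b + b) = 1 := by
    rw [← two_mul, pow_mul]; norm_num
  rw [h2, mul_one]

lemma cInt_dvd {n : ℕ} (hn : 1 ≤ n) {T : Finset ℕ} (hT : T ⊆ Finset.Icc 1 (n-1)) :
    (2:ℤ) ^ T.card ∣ 2 ^ depth 2 n * cInt n T := by
  rw [cInt, Finset.mul_sum]
  apply Finset.dvd_sum
  intro V hV
  have hVT := Finset.mem_powerset.mp hV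
  have h1 : (2:ℤ) ^ V.card ∣ 2 ^ depth 2 n * (alphaCount n V : ℤ) :=
    alpha_dvd hn (hVT.trans hT)
  have h2 : ((-2:ℤ)) ^ (T.card - V.card) = (-1) ^ (T.card - V.card) * 2 ^ (T.card - V.card) := by
    rw [← neg_one_mul, mul_pow]
  calc (2:ℤ) ^ T.card = 2 ^ (T.card - V.card) * 2 ^ V.card := by
        rw [← pow_add]
        congr 1
        have := Finset.card_le_card hVT
        omega
    _ ∣ 2 ^ (T.card - V.card) * (2 ^ depth 2 n * (alphaCount n V : ℤ)) :=
        mul_dvd_mul_left _ h1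
    _ = 2 ^ depth 2 n * (2 ^ (T.card - V.card) * (alphaCount n V : ℤ)) := by ring
    _ ∣ 2 ^ depth 2 n * ((-2) ^ (T.card - V.card) * (alphaCount n V : ℤ)) := by
        apply mul_dvd_mul_left
        apply mul_dvd_mul_right
        rw [h2]
        exact Dvd.intro_left _ rfl

lemma beta_eq_sum_cInt (n : ℕ) (S : Finset ℕ) :
    (descStat n S : ℤ) = ∑ T ∈ S.powerset, cInt n T := by
  have step1 : ∑ T ∈ S.powerset, cInt n T
      = ∑ V ∈ S.powerset, (-1 : ℤ) ^ ((S \ V).card) * alphaCount n V := by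
    unfold cInt
    rw [powerset_sum_swap S (fun V T => (-2 : ℤ) ^ (T.card - V.card) * alphaCount n V)]
    apply Finset.sum_congr rfl
    intro V hV
    have hcong : ∀ U ∈ (S \ V).powerset, (-2 : ℤ) ^ ((V ∪ U).card - V.card) * alphaCount n V
        = (alphaCount n V : ℤ) * (-2) ^ U.card := by
      intro U hU
      have hUS := Finset.mem_powerset.mp hU
      have hdisj : Disjoint V U := Finset.disjoint_sdiff.mono_right hUS
      rw [Finset.card_union_of_disjoint hdisj, Nat.add_sub_cancel_left]
      ring
    rw [Finset.sum_congr rfl hcong, ← Finset.mul_sum, sum_powerset_pow]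
    norm_num [mul_comm]
  rw [step1]
  have step2 : ∀ V ∈ S.powerset, (-1 : ℤ) ^ ((S \ V).card) * alphaCount n V
      = ∑ U ∈ V.powerset, (-1 : ℤ) ^ ((S \ V).card) * descStat n U := by
    intro V hV
    rw [alpha_eq_sum_beta]
    push_cast
    rw [Finset.mul_sum]
  rw [Finset.sum_congr rfl step2,
    powerset_sum_swap S (fun U V => (-1 : ℤ) ^ ((S \ V).card) * descStat n U)]
  have inner : ∀ U ∈ S.powerset,
      (∑ W ∈ (S \ U).powerset, (-1:ℤ) ^ ((S \ (U ∪ W)).card) * descStat n U)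
      = (if U = S then (descStat n U : ℤ) else 0) := by
    intro U hU
    have hUS := Finset.mem_powerset.mp hU
    have hcong : ∀ W ∈ (S \ U).powerset, (-1:ℤ) ^ ((S \ (U ∪ W)).card) * descStat n U
        = ((-1:ℤ) ^ ((S \ U).card) * descStat n U) * (-1) ^ W.card := by
      intro W hW
      have hWS := Finset.mem_powerset.mp hW
      have h1 : S \ (U ∪ W) = (S \ U) \ W := by
        ext x; simp only [Finset.mem_sdiff, Finset.mem_union]; tauto
      have h2 : ((S \ U) \ W).card = (S \ U).card - W.card := Finset.card_sdiff_of_subset hWS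
      rw [h1, h2, neg_one_pow_sub (Finset.card_le_card hWS)]
      ring
    rw [Finset.sum_congr rfl hcong, ← Finset.mul_sum, sum_powerset_pow]
    by_cases hUeq : U = S
    · subst hUeq
      simp
    · have hne : (S \ U).card ≠ 0 := by
        rw [Finset.card_ne_zero]
        rw [Finset.sdiff_nonempty]
        intro hSU
        exact hUeq (Finset.Subset.antisymm hUS hSU)
      rw [if_neg hUeq]
      norm_num [hne]
  rw [Finset.sum_congr rfl inner, Finset.sum_ite_eq' S.powerset S
    (fun U => (descStat n U : ℤ)), if_pos (Finset.mem_powerset_self S)]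



lemma multinomial_subset {ι : Type*} {s s' : Finset ι} (hss : s ⊆ s') (k : ι → ℕ)
    (hk : ∀ T ∈ s', T ∉ s → k T = 0) : Nat.multinomial s' k = Nat.multinomial s k := by
  unfold Nat.multinomial
  rw [← Finset.sum_subset hss hk,
    ← Finset.prod_subset hss (fun x hx hnx => by rw [hk x hx hnx]; exact Nat.factorial_zero)]

lemma padicValNat_prod {ι : Type*} (s : Finset ι) (f : ι → ℕ) (hf : ∀ i ∈ s, f i ≠ 0) :
    padicValNat 2 (∏ i ∈ s, f i) = ∑ i ∈ s, padicValNat 2 (f i) := by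
  induction s using Finset.cons_induction with
  | empty => simp
  | cons a s ha ih =>
    rw [Finset.prod_cons, Finset.sum_cons,
      padicValNat.mul (hf a (Finset.mem_cons_self a s))
        (Finset.prod_ne_zero_iff.mpr (fun i hi => hf i (Finset.mem_cons_of_mem hi))),
      ih (fun i hi => hf i (Finset.mem_cons_of_mem hi))]

lemma v2_multinomial (s : Finset (Finset ℕ)) (k : Finset ℕ → ℕ) :
    padicValNat 2 (Nat.multinomial s k) + ∑ T ∈ s, (k T - digitSum 2 (k T))
      = (∑ T ∈ s, k T) - digitSum 2 (∑ T ∈ s, k T) := by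
  have hspec := Nat.multinomial_spec s k
  have h1 := congrArg (padicValNat 2) hspec
  rw [padicValNat.mul (Finset.prod_ne_zero_iff.mpr fun i _ => Nat.factorial_ne_zero _)
      (Nat.multinomial_pos s k).ne',
    padicValNat_prod _ _ (fun i _ => Nat.factorial_ne_zero _), v2_factorial] at h1
  have h2 : ∑ T ∈ s, padicValNat 2 ((k T)!) = ∑ T ∈ s, (k T - digitSum 2 (k T)) :=
    Finset.sum_congr rfl fun T _ => v2_factorial _
  omega

open Classical in
lemma piAntidiag_powerset_eq (n r : ℕ) {S : Finset ℕ} (hS : S ∈ (Finset.Icc 1 (n-1)).powerset) :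
    Finset.piAntidiag S.powerset r =
      (Finset.piAntidiag ((Finset.Icc 1 (n-1)).powerset) r).filter
        (fun k => ∀ T, k T ≠ 0 → T ⊆ S) := by
  ext k
  simp only [Finset.mem_piAntidiag, Finset.mem_filter]
  have hSI : S ⊆ Finset.Icc 1 (n-1) := Finset.mem_powerset.mp hS
  have hsub' : S.powerset ⊆ (Finset.Icc 1 (n-1)).powerset := Finset.powerset_mono.mpr hSI
  constructor
  · rintro ⟨hsum, hsupp⟩
    have hsupp' : ∀ T, k T ≠ 0 → T ⊆ S := fun T hT => Finset.mem_powerset.mp (hsupp T hT)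
    refine ⟨⟨?_, fun T hT => hsub' (hsupp T hT)⟩, hsupp'⟩
    rw [← hsum]
    exact (Finset.sum_subset hsub' (fun T _ hT => by
      by_contra h0
      exact hT (hsupp T h0))).symm
  · rintro ⟨⟨hsum, _⟩, hsub⟩
    refine ⟨?_, fun T hT => Finset.mem_powerset.mpr (hsub T hT)⟩
    rw [← hsum]
    exact Finset.sum_subset hsub' (fun T _ hT => by
      by_contra h0
      exact hT (Finset.mem_powerset.mpr (hsub T h0)))

lemma term_dvd (n r : ℕ) (hn : 1 ≤ n) (hd : 1 ≤ depth 2 n) (k : Finset ℕ → ℕ)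
    (hk : k ∈ Finset.piAntidiag ((Finset.Icc 1 (n-1)).powerset) r) :
    (2:ℤ) ^ ((r - digitSum 2 r) + (n - 1)) ∣
      2 ^ (r * depth 2 n) *
        ((2:ℤ) ^ (n - 1 -
            ((((Finset.Icc 1 (n-1)).powerset).filter (fun T => k T ≠ 0)).sup id).card) *
          ((Nat.multinomial ((Finset.Icc 1 (n-1)).powerset) k : ℤ) *
            ∏ T ∈ (Finset.Icc 1 (n-1)).powerset, cInt n T ^ k T)) := by
  classical
  rw [Finset.mem_piAntidiag] at hk
  obtain ⟨hsum, hsupp⟩ := hk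
  set I := Finset.Icc 1 (n-1) with hIdef
  set P := I.powerset with hPdef
  set d := depth 2 n with hddef
  set s0 := P.filter (fun T => k T ≠ 0) with hs0def
  set Uk := s0.sup id with hUkdef
  have hs0sub : s0 ⊆ P := Finset.filter_subset _ _
  have hzero : ∀ T ∈ P, T ∉ s0 → k T = 0 := by
    intro T hT hnT
    by_contra h0
    exact hnT (Finset.mem_filter.mpr ⟨hT, h0⟩)
  have hsum0 : ∑ T ∈ s0, k T = r := by
    rw [hs0def, Finset.sum_filter_ne_zero, hsum]
  have hM : Nat.multinomial P k = Nat.multinomial s0 k :=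
    multinomial_subset hs0sub k hzero
  have hprod : ∏ T ∈ P, cInt n T ^ k T = ∏ T ∈ s0, cInt n T ^ k T :=
    (Finset.prod_subset hs0sub (fun T hT hnT => by rw [hzero T hT hnT, pow_zero])).symm
  -- per-factor divisibility
  have hfac : ∀ T ∈ s0, (2:ℤ) ^ (k T * max T.card d) ∣ 2 ^ (d * k T) * cInt n T ^ k T := by
    intro T hT
    have hTI : T ⊆ I := Finset.mem_powerset.mp (Finset.mem_filter.mp hT).1
    have hbase : (2:ℤ) ^ (max T.card d) ∣ 2 ^ d * cInt n T := by
      rcases le_total T.card d with hcase | hcase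
      · rw [max_eq_right hcase]
        exact Dvd.intro _ rfl
      · rw [max_eq_left hcase]
        exact cInt_dvd hn hTI
    have := pow_dvd_pow_of_dvd hbase (k T)
    rw [← pow_mul, mul_pow, ← pow_mul] at this
    calc (2:ℤ) ^ (k T * max T.card d) = 2 ^ (max T.card d * k T) := by rw [mul_comm]
      _ ∣ 2 ^ (d * k T) * cInt n T ^ k T := this
  have hprodfac : (2:ℤ) ^ (∑ T ∈ s0, k T * max T.card d) ∣
      2 ^ (d * r) * ∏ T ∈ s0, cInt n T ^ k T := by
    have h1 : (2:ℤ) ^ (∑ T ∈ s0, k T * max T.card d)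
        = ∏ T ∈ s0, (2:ℤ) ^ (k T * max T.card d) :=
      (Finset.prod_pow_eq_pow_sum s0 (fun T => k T * max T.card d) (2:ℤ)).symm
    have h2 := Finset.prod_dvd_prod_of_dvd (fun T => (2:ℤ) ^ (k T * max T.card d))
      (fun T => (2:ℤ) ^ (d * k T) * cInt n T ^ k T) hfac
    rw [← h1] at h2
    have h3 : ∏ T ∈ s0, ((2:ℤ) ^ (d * k T) * cInt n T ^ k T)
        = 2 ^ (d * r) * ∏ T ∈ s0, cInt n T ^ k T := by
      rw [Finset.prod_mul_distrib, Finset.prod_pow_eq_pow_sum s0 (fun T => d * k T) (2:ℤ),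
        ← Finset.mul_sum, hsum0]
    rwa [h3] at h2
  -- multinomial valuation
  set m := padicValNat 2 (Nat.multinomial s0 k) with hmdef
  have hv2M : m + ∑ T ∈ s0, (k T - digitSum 2 (k T)) = r - digitSum 2 r := by
    have := v2_multinomial s0 k
    rw [hsum0] at this
    exact this
  have hMdvd : (2:ℤ) ^ m ∣ (Nat.multinomial s0 k : ℤ) := by
    exact_mod_cast pow_padicValNat_dvd (p := 2) (n := Nat.multinomial s0 k)
  -- card bounds
  have hUkI : Uk ⊆ I :=
    Finset.sup_le (fun T hT => Finset.mem_powerset.mp (Finset.mem_filter.mp hT).1)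
  have hIcard : I.card = n - 1 := by rw [hIdef, Nat.card_Icc]; omega
  have hUkn : Uk.card ≤ n - 1 := by
    have h4 := Finset.card_le_card hUkI
    rwa [hIcard] at h4
  have hUksum : Uk.card ≤ ∑ T ∈ s0, T.card := by
    rw [hUkdef, Finset.sup_eq_biUnion]
    exact Finset.card_biUnion_le
  -- per-term arithmetic inequality
  have harith : ∀ T ∈ s0, (k T - digitSum 2 (k T)) + T.card ≤ k T * max T.card d := by
    intro T hT
    have hkT : k T ≠ 0 := (Finset.mem_filter.mp hT).2
    have h1 : 1 ≤ digitSum 2 (k T) := digitSum_pos hkT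
    have h2 : digitSum 2 (k T) ≤ k T := digitSum_le _
    rcases Nat.eq_zero_or_pos T.card with hc | hc
    · have h3 : k T * 1 ≤ k T * max T.card d :=
        Nat.mul_le_mul_left _ (le_trans hd (le_max_right _ _))
      omega
    · have h3 : k T * T.card ≤ k T * max T.card d :=
        Nat.mul_le_mul_left _ (le_max_left _ _)
      have h4 : k T * 1 ≤ k T * T.card := Nat.mul_le_mul_left _ hc
      have h5 : (k T - 1) * 1 ≤ (k T - 1) * T.card := Nat.mul_le_mul_left _ hc
      have h6 : k T + T.card ≤ k T * T.card + 1 := by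
        rcases Nat.exists_eq_succ_of_ne_zero hkT with ⟨m', hm'⟩
        rw [hm', Nat.succ_mul]
        have h7 : m' ≤ m' * T.card := Nat.le_mul_of_pos_right m' hc
        omega
      omega
  have hsumarith : (∑ T ∈ s0, ((k T - digitSum 2 (k T)) + T.card))
      ≤ ∑ T ∈ s0, k T * max T.card d := Finset.sum_le_sum harith
  rw [Finset.sum_add_distrib] at hsumarith
  -- final exponent inequality
  have hexp : (r - digitSum 2 r) + (n - 1)
      ≤ m + (∑ T ∈ s0, k T * max T.card d) + (n - 1 - Uk.card) := by
    omega
  -- assemble divisibility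
  have hbig : (2:ℤ) ^ (m + (∑ T ∈ s0, k T * max T.card d) + (n - 1 - Uk.card)) ∣
      2 ^ (r * d) * ((2:ℤ) ^ (n - 1 - Uk.card) *
        ((Nat.multinomial P k : ℤ) * ∏ T ∈ P, cInt n T ^ k T)) := by
    rw [hM, hprod]
    have h7 : (2:ℤ) ^ (m + (∑ T ∈ s0, k T * max T.card d) + (n - 1 - Uk.card))
        = 2 ^ m * 2 ^ (∑ T ∈ s0, k T * max T.card d) * 2 ^ (n - 1 - Uk.card) := by
      rw [pow_add, pow_add]
    rw [h7]
    have h8 : 2 ^ (r * d) * ((2:ℤ) ^ (n - 1 - Uk.card) *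
        ((Nat.multinomial s0 k : ℤ) * ∏ T ∈ s0, cInt n T ^ k T))
        = ((Nat.multinomial s0 k : ℤ)) * (2 ^ (d * r) * ∏ T ∈ s0, cInt n T ^ k T)
          * 2 ^ (n - 1 - Uk.card) := by
      rw [mul_comm r d]; ring
    rw [h8]
    exact mul_dvd_mul (mul_dvd_mul hMdvd hprodfac) dvd_rfl
  exact dvd_trans (pow_dvd_pow 2 hexp) hbig

end Stmt16

theorem stmt16 (r n : ℕ) (hr : 0 < r) (hn : 1 ≤ n) (hd : 0 < depth 2 n) :
    (r : ℤ) - digitSum 2 r + n - 1 - r * depth 2 n ≤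
      padicValNat 2 (powSumDes r n) := by
  classical
  have hIcard : (Finset.Icc 1 (n-1)).card = n - 1 := by rw [Nat.card_Icc]; omega
  have hA : ((powSumDes r n : ℤ)) = ∑ S ∈ (Finset.Icc 1 (n-1)).powerset,
      (∑ T ∈ S.powerset, Stmt16.cInt n T) ^ r := by
    rw [powSumDes]
    push_cast
    exact Finset.sum_congr rfl fun S _ => by rw [← Stmt16.beta_eq_sum_cInt]
  have e1 : ∀ S ∈ (Finset.Icc 1 (n-1)).powerset, (∑ T ∈ S.powerset, Stmt16.cInt n T) ^ r
      = ∑ k ∈ Finset.piAntidiag ((Finset.Icc 1 (n-1)).powerset) r,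
          if (∀ T, k T ≠ 0 → T ⊆ S) then
            (Nat.multinomial ((Finset.Icc 1 (n-1)).powerset) k : ℤ) *
              ∏ T ∈ (Finset.Icc 1 (n-1)).powerset, Stmt16.cInt n T ^ k T
          else 0 := by
    intro S hS
    rw [Finset.sum_pow_eq_sum_piAntidiag, Stmt16.piAntidiag_powerset_eq n r hS,
      Finset.sum_filter]
    apply Finset.sum_congr rfl
    intro k hk
    rw [Finset.mem_piAntidiag] at hk
    by_cases hcond : ∀ T, k T ≠ 0 → T ⊆ S
    · rw [if_pos hcond, if_pos hcond]
      have hsub : S.powerset ⊆ (Finset.Icc 1 (n-1)).powerset :=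
        Finset.powerset_mono.mpr (Finset.mem_powerset.mp hS)
      have hzero : ∀ T ∈ (Finset.Icc 1 (n-1)).powerset, T ∉ S.powerset → k T = 0 := by
        intro T _ hnT
        by_contra h0
        exact hnT (Finset.mem_powerset.mpr (hcond T h0))
      rw [Stmt16.multinomial_subset hsub k hzero,
        Finset.prod_subset hsub (fun T hT hnT => by rw [hzero T hT hnT, pow_zero])]
    · rw [if_neg hcond, if_neg hcond]
  have e2 : ((powSumDes r n : ℤ)) = ∑ k ∈ Finset.piAntidiag ((Finset.Icc 1 (n-1)).powerset) r,
      ((((Finset.Icc 1 (n-1)).powerset).filter (fun S => ∀ T, k T ≠ 0 → T ⊆ S)).card : ℤ) *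
        ((Nat.multinomial ((Finset.Icc 1 (n-1)).powerset) k : ℤ) *
          ∏ T ∈ (Finset.Icc 1 (n-1)).powerset, Stmt16.cInt n T ^ k T) := by
    rw [hA, Finset.sum_congr rfl e1, Finset.sum_comm]
    apply Finset.sum_congr rfl
    intro k _
    rw [← Finset.sum_filter, Finset.sum_const, nsmul_eq_mul]
  have e3 : ∀ k ∈ Finset.piAntidiag ((Finset.Icc 1 (n-1)).powerset) r,
      (((Finset.Icc 1 (n-1)).powerset).filter (fun S => ∀ T, k T ≠ 0 → T ⊆ S)).card
        = 2 ^ (n - 1 -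
            ((((Finset.Icc 1 (n-1)).powerset).filter (fun T => k T ≠ 0)).sup id).card) := by
    intro k hk
    rw [Finset.mem_piAntidiag] at hk
    obtain ⟨hsum, hsupp⟩ := hk
    set Uk := ((((Finset.Icc 1 (n-1)).powerset).filter (fun T => k T ≠ 0)).sup id) with hUk
    have hUkI : Uk ⊆ Finset.Icc 1 (n-1) :=
      Finset.sup_le (fun T hT => Finset.mem_powerset.mp (Finset.mem_filter.mp hT).1)
    have hfeq : ((Finset.Icc 1 (n-1)).powerset).filter (fun S => ∀ T, k T ≠ 0 → T ⊆ S)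
        = Finset.Icc Uk (Finset.Icc 1 (n-1)) := by
      ext S
      rw [Finset.mem_filter, Finset.mem_powerset, Finset.mem_Icc]
      constructor
      · rintro ⟨hSI, hcond⟩
        refine ⟨Finset.sup_le (fun T hT => hcond T (Finset.mem_filter.mp hT).2), hSI⟩
      · rintro ⟨h1, h2⟩
        refine ⟨h2, fun T hT => ?_⟩
        have hmem : T ∈ ((Finset.Icc 1 (n-1)).powerset).filter (fun T => k T ≠ 0) :=
          Finset.mem_filter.mpr ⟨hsupp T hT, hT⟩
        exact le_trans (Finset.le_sup (f := id) hmem) h1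
    rw [hfeq, Finset.card_Icc_finset hUkI, hIcard]
  have e4 : ((powSumDes r n : ℤ)) = ∑ k ∈ Finset.piAntidiag ((Finset.Icc 1 (n-1)).powerset) r,
      (2:ℤ) ^ (n - 1 -
          ((((Finset.Icc 1 (n-1)).powerset).filter (fun T => k T ≠ 0)).sup id).card) *
        ((Nat.multinomial ((Finset.Icc 1 (n-1)).powerset) k : ℤ) *
          ∏ T ∈ (Finset.Icc 1 (n-1)).powerset, Stmt16.cInt n T ^ k T) := by
    rw [e2]
    apply Finset.sum_congr rfl
    intro k hk
    rw [e3 k hk]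
    push_cast
    ring
  have hdvd : (2:ℤ) ^ ((r - digitSum 2 r) + (n - 1)) ∣
      2 ^ (r * depth 2 n) * ((powSumDes r n : ℤ)) := by
    rw [e4, Finset.mul_sum]
    exact Finset.dvd_sum (fun k hk => Stmt16.term_dvd n r hn hd k hk)
  have hpos : powSumDes r n ≠ 0 := by
    have hb : 0 < descStat n ∅ := by
      rw [descStat]
      apply Finset.card_pos.mpr
      refine ⟨1, Finset.mem_filter.mpr ⟨Finset.mem_univ _, ?_⟩⟩
      exact Finset.subset_empty.mp ((Stmt16.descSet_subset_empty_iff 1).mpr rfl)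
    have hterm : 0 < descStat n ∅ ^ r := pow_pos hb r
    have hle : descStat n ∅ ^ r ≤ powSumDes r n := by
      rw [powSumDes]
      exact Finset.single_le_sum (f := fun S => descStat n S ^ r)
        (fun S _ => Nat.zero_le _) (Finset.empty_mem_powerset _)
    exact (Nat.lt_of_lt_of_le hterm hle).ne'
  have hnat : (2:ℕ) ^ ((r - digitSum 2 r) + (n - 1)) ∣
      2 ^ (r * depth 2 n) * powSumDes r n := by
    exact_mod_cast hdvd
  have hv : (r - digitSum 2 r) + (n - 1) ≤
      padicValNat 2 (2 ^ (r * depth 2 n) * powSumDes r n) :=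
    (padicValNat_dvd_iff_le (mul_ne_zero (pow_ne_zero _ two_ne_zero) hpos)).mp hnat
  rw [padicValNat.mul (pow_ne_zero _ two_ne_zero) hpos, padicValNat.prime_pow] at hv
  have hur : digitSum 2 r ≤ r := Stmt16.digitSum_le r
  have hcast : ((r : ℤ)) * ((depth 2 n : ℤ)) = ((r * depth 2 n : ℕ) : ℤ) := by push_cast; ring
  rw [hcast]
  generalize hm : r * depth 2 n = m at hv ⊢
  clear * - hv hur hn
  omega
end

section
/- Let k ≥ 0 and let n be an integer with 2^k ≤ n ≤ 2^{k+1} − 1. Then 2^{2^k − 1} divides A^2_n. -/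
open Finset

namespace Stmt18Aux

variable {n : ℕ}

/-- ascending-on-blocks condition -/
def IsAsc (B : Fin n → Fin n) (σ : Equiv.Perm (Fin n)) : Prop :=
  ∀ i j : Fin n, (i : ℕ) + 1 = (j : ℕ) → B i = B j → σ i < σ j

instance (B : Fin n → Fin n) (σ : Equiv.Perm (Fin n)) : Decidable (IsAsc B σ) := by
  unfold IsAsc; infer_instance

lemma isAsc_strictMonoOn {B : Fin n → Fin n} (hB : Monotone B) {σ : Equiv.Perm (Fin n)}
    (hσ : IsAsc B σ) : ∀ j i : Fin n, B i = B j → i < j → σ i < σ j := by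
  have key : ∀ m : ℕ, ∀ j i : Fin n, (j : ℕ) = m → B i = B j → i < j → σ i < σ j := by
    intro m
    induction m using Nat.strong_induction_on with
    | _ m IH =>
      intro j i hjm hBij hij
      have hj' : (j : ℕ) - 1 < n := lt_of_le_of_lt (le_trans (Nat.sub_le _ _) (le_refl _)) j.isLt
      set j' : Fin n := ⟨(j : ℕ) - 1, hj'⟩ with hj'def
      have hij' : i ≤ j' := by
        have : (i : ℕ) ≤ (j : ℕ) - 1 := by omega
        exact this
      have hj'j : j' < j := by
        have : (j' : ℕ) < (j : ℕ) := by simp [hj'def]; omega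
        exact this
      have hsucc : (j' : ℕ) + 1 = (j : ℕ) := by simp [hj'def]; omega
      have hBj' : B j' = B j := le_antisymm (hB hj'j.le) (hBij ▸ hB hij')
      rcases eq_or_lt_of_le hij' with h | h
      · exact h ▸ hσ j' j hsucc hBj'
      · exact lt_trans (IH (j' : ℕ) (by omega) j' i rfl (hBij.trans hBj'.symm) h)
          (hσ j' j hsucc hBj')
  exact fun j i => key (j : ℕ) j i rfl

/-- fiber-wise permutations glued to a permutation of `Fin n` -/
def glue (B : Fin n → Fin n) (u : ∀ b : Fin n, Equiv.Perm {x : Fin n // B x = b}) :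
    Equiv.Perm (Fin n) :=
  ((Equiv.sigmaFiberEquiv B).symm.trans (Equiv.sigmaCongrRight u)).trans
    (Equiv.sigmaFiberEquiv B)

lemma glue_apply (B : Fin n → Fin n) (u : ∀ b : Fin n, Equiv.Perm {x : Fin n // B x = b})
    (x : Fin n) : glue B u x = ((u (B x)) ⟨x, rfl⟩).1 := rfl

lemma glue_B (B : Fin n → Fin n) (u : ∀ b : Fin n, Equiv.Perm {x : Fin n // B x = b})
    (x : Fin n) : B (glue B u x) = B x := ((u (B x)) ⟨x, rfl⟩).2

lemma glue_injective (B : Fin n → Fin n) {u v : ∀ b : Fin n, Equiv.Perm {x : Fin n // B x = b}}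
    (h : glue B u = glue B v) : u = v := by
  funext b
  ext ⟨x, hx⟩
  subst hx
  have h2 : glue B u x = glue B v x := by rw [h]
  exact congrArg Fin.val h2



lemma perm_strictMono_eq_one {u : Equiv.Perm (Fin n)} (h : StrictMono (u : Fin n → Fin n)) :
    u = 1 := by
  have hinv : StrictMono (u.symm : Fin n → Fin n) := by
    intro a b hab
    by_contra hc
    push_neg at hc
    have := h.monotone hc
    simp at this
    exact absurd hab (not_lt.mpr this)
  ext x
  have h1 : x ≤ u x := @StrictMono.le_apply (Fin n) _ (inferInstance : WellFoundedLT (Fin n)) _ h x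
  have h2 : u x ≤ u.symm (u x) := @StrictMono.le_apply (Fin n) _ (inferInstance : WellFoundedLT (Fin n)) _ hinv (u x)
  simp at h2
  exact le_antisymm h2 h1

def fib (B : Fin n → Fin n) (b : Fin n) : ℕ := (univ.filter fun x => B x = b).card

def Psi (B : Fin n → Fin n)
    (p : {σ : Equiv.Perm (Fin n) // IsAsc B σ} × (∀ b : Fin n, Equiv.Perm {x : Fin n // B x = b})) :
    Equiv.Perm (Fin n) :=
  p.1.1 * glue B p.2

lemma Psi_injective (B : Fin n → Fin n) (hB : Monotone B) : Function.Injective (Psi B) := by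
  rintro ⟨⟨σ₁, hσ₁⟩, u₁⟩ ⟨⟨σ₂, hσ₂⟩, u₂⟩ h
  simp only [Psi] at h
  set w : Equiv.Perm (Fin n) := σ₂⁻¹ * σ₁ with hwdef
  have hkey : w * glue B u₁ = glue B u₂ := by
    rw [hwdef, mul_assoc, h, ← mul_assoc, inv_mul_cancel, one_mul]
  have hw2 : w = glue B u₂ * (glue B u₁)⁻¹ := by
    rw [← hkey, mul_assoc, mul_inv_cancel, mul_one]
  have hwB : ∀ x, B (w x) = B x := by
    intro x
    rw [hw2]
    have h1 : B ((glue B u₁)⁻¹ x) = B x := by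
      have h0 := glue_B B u₁ ((glue B u₁)⁻¹ x)
      simpa using h0.symm
    simp only [Equiv.Perm.mul_apply]
    exact (glue_B B u₂ _).trans h1
  have hwid : ∀ z, σ₂ (w z) = σ₁ z := by
    intro z
    simp [hwdef]
  have hw : StrictMono (w : Fin n → Fin n) := by
    intro x y hxy
    by_cases hBxy : B x = B y
    · have h1 : σ₁ x < σ₁ y := isAsc_strictMonoOn hB hσ₁ y x hBxy hxy
      rcases lt_trichotomy (w x) (w y) with hlt | heq | hgt
      · exact hlt
      · exfalso
        have : σ₁ x = σ₁ y := by rw [← hwid, ← hwid, heq]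
        exact absurd this (ne_of_lt h1)
      · exfalso
        have hBw : B (w y) = B (w x) := by rw [hwB, hwB, hBxy]
        have : σ₂ (w y) < σ₂ (w x) := isAsc_strictMonoOn hB hσ₂ (w x) (w y) hBw hgt
        rw [hwid, hwid] at this
        exact absurd h1 (not_lt.mpr this.le)
    · have hBlt : B x < B y := lt_of_le_of_ne (hB hxy.le) hBxy
      by_contra hc
      push_neg at hc
      have : B (w y) ≤ B (w x) := hB hc
      rw [hwB, hwB] at this
      exact absurd hBlt (not_lt.mpr this)
  have hw1 : w = 1 := perm_strictMono_eq_one hw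
  have hσeq : σ₁ = σ₂ := by
    have := hwdef.symm.trans hw1
    rwa [inv_mul_eq_one, eq_comm] at this
  have hglue : glue B u₁ = glue B u₂ := by rw [← hkey, hw1, one_mul]
  have hueq : u₁ = u₂ := glue_injective B hglue
  simp [Prod.ext_iff, Subtype.ext_iff, hσeq, hueq]

lemma Psi_surjective (B : Fin n → Fin n) (hB : Monotone B) : Function.Surjective (Psi B) := by
  intro π
  set f : Fin n → ℕ := fun x => n * (B x : ℕ) + (π x : ℕ) with hfdef
  set τ : Equiv.Perm (Fin n) := Tuple.sort f with hτdef
  have hmono : Monotone (f ∘ τ) := Tuple.monotone_sort f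
  have hcoe : ∀ x : Fin n, ((B x : ℕ)) = f x / n := by
    intro x
    rw [hfdef]
    simp only
    rw [Nat.mul_add_div x.pos, Nat.div_eq_of_lt (π x).isLt, add_zero]
  have hBτ : ∀ x, B (τ x) = B x := by
    have h1 : Monotone ((fun x => (B x : ℕ)) ∘ τ) := by
      intro a b hab
      simp only [Function.comp_apply]
      rw [hcoe, hcoe]
      exact Nat.div_le_div_right (hmono hab)
    have h2 : Monotone ((fun x => (B x : ℕ)) ∘ (1 : Equiv.Perm (Fin n))) := by
      intro a b hab
      simpa using hB hab
    have h3 := Tuple.unique_monotone h1 h2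
    intro x
    have := congrFun h3 x
    simp only [Function.comp_apply, Equiv.Perm.coe_one, id_eq] at this
    exact Fin.ext this
  have hfτ : ∀ x, f (τ x) = n * (B x : ℕ) + (π (τ x) : ℕ) := by
    intro x
    rw [hfdef]
    simp only
    rw [hBτ]
  set σ : Equiv.Perm (Fin n) := π * τ with hσdef
  have hσ : IsAsc B σ := by
    intro i j hij hBij
    have hijlt : i < j := by
      have : (i : ℕ) < (j : ℕ) := by omega
      exact this
    have h1 : f (τ i) ≤ f (τ j) := hmono hijlt.le
    rw [hfτ, hfτ, hBij] at h1
    have h2 : (π (τ i) : ℕ) ≤ (π (τ j) : ℕ) := by omega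
    have hne : π (τ i) ≠ π (τ j) := by
      intro hc
      have : τ i = τ j := π.injective hc
      have : i = j := τ.injective this
      rw [this] at hij
      omega
    have : (π (τ i) : ℕ) < (π (τ j) : ℕ) :=
      lt_of_le_of_ne h2 (fun hc => hne (Fin.ext hc))
    simpa [hσdef, Equiv.Perm.mul_apply] using this
  set u : ∀ b : Fin n, Equiv.Perm {x : Fin n // B x = b} := fun b =>
    Equiv.Perm.subtypePerm τ⁻¹ (fun x => by
      constructor
      · intro hx
        rw [← hx]
        conv_lhs => rw [show x = τ (τ⁻¹ x) by simp]
        rw [hBτ]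
      · intro hx
        rw [← hx]
        conv_rhs => rw [show x = τ (τ⁻¹ x) by simp]
        rw [hBτ]) with hudef
  have hglue : glue B u = τ⁻¹ := by
    apply Equiv.ext
    intro x
    rw [glue_apply]
    rfl
  refine ⟨⟨⟨σ, hσ⟩, u⟩, ?_⟩
  simp only [Psi, hglue, hσdef]
  rw [mul_assoc, mul_inv_cancel, mul_one]

theorem factorial_eq_asc_mul (B : Fin n → Fin n) (hB : Monotone B) :
    Nat.factorial n = (univ.filter (IsAsc B)).card * ∏ b : Fin n, Nat.factorial (fib B b) := by
  have hbij : Function.Bijective (Psi B) := ⟨Psi_injective B hB, Psi_surjective B hB⟩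
  have hcard := Fintype.card_of_bijective hbij
  rw [Fintype.card_perm, Fintype.card_fin] at hcard
  rw [← hcard, Fintype.card_prod, Fintype.card_subtype, Fintype.card_pi]
  congr 1
  apply Finset.prod_congr rfl
  intro b _
  rw [Fintype.card_perm, Fintype.card_subtype]
  rfl


/-! ### The block function of a set of descent positions -/

def blockFn (n : ℕ) (T : Finset ℕ) : Fin n → Fin n := fun j =>
  ⟨min (T.filter (· ≤ (j : ℕ))).card (j : ℕ), lt_of_le_of_lt (min_le_right _ _) j.isLt⟩

variable {T : Finset ℕ}

lemma blockFn_val (hT : T ⊆ Finset.Icc 1 (n - 1)) (j : Fin n) :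
    ((blockFn n T j : Fin n) : ℕ) = (T.filter (· ≤ (j : ℕ))).card := by
  have hsub : T.filter (· ≤ (j : ℕ)) ⊆ Finset.Icc 1 (j : ℕ) := by
    intro x hx
    rw [mem_filter] at hx
    have := hT hx.1
    rw [mem_Icc] at this ⊢
    exact ⟨this.1, hx.2⟩
  have hle : (T.filter (· ≤ (j : ℕ))).card ≤ (j : ℕ) := by
    have := Finset.card_le_card hsub
    rwa [Nat.card_Icc, Nat.add_sub_cancel] at this
  simp [blockFn, min_eq_left hle]

lemma blockFn_mono : Monotone (blockFn n T) := by
  intro i j hij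
  have hij' : (i : ℕ) ≤ (j : ℕ) := hij
  have h1 : (T.filter (· ≤ (i : ℕ))).card ≤ (T.filter (· ≤ (j : ℕ))).card := by
    apply Finset.card_le_card
    intro x hx
    rw [mem_filter] at hx ⊢
    exact ⟨hx.1, by omega⟩
  exact min_le_min h1 hij'

lemma blockFn_step (hT : T ⊆ Finset.Icc 1 (n - 1)) {i j : Fin n} (hij : (i : ℕ) + 1 = (j : ℕ)) :
    blockFn n T i = blockFn n T j ↔ (j : ℕ) ∉ T := by
  have hval : ∀ x : Fin n, ((blockFn n T x : Fin n) : ℕ) = (T.filter (· ≤ (x : ℕ))).card :=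
    blockFn_val hT
  have hfil : T.filter (· ≤ (j : ℕ)) =
      if (j : ℕ) ∈ T then insert (j : ℕ) (T.filter (· ≤ (i : ℕ)))
      else T.filter (· ≤ (i : ℕ)) := by
    split_ifs with hj
    · ext x
      simp only [mem_filter, mem_insert]
      constructor
      · rintro ⟨hxT, hxj⟩
        rcases eq_or_lt_of_le hxj with h | h
        · exact Or.inl h
        · exact Or.inr ⟨hxT, by omega⟩
      · rintro (rfl | ⟨hxT, hxi⟩)
        · exact ⟨hj, le_refl _⟩
        · exact ⟨hxT, by omega⟩
    · ext x
      simp only [mem_filter]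
      constructor
      · rintro ⟨hxT, hxj⟩
        refine ⟨hxT, ?_⟩
        rcases eq_or_lt_of_le hxj with h | h
        · exact absurd (h ▸ hxT) hj
        · omega
      · rintro ⟨hxT, hxi⟩
        exact ⟨hxT, by omega⟩
  constructor
  · intro heq hjT
    have h1 := hval i
    have h2 := hval j
    rw [heq] at h1
    rw [hfil, if_pos hjT, Finset.card_insert_of_notMem (by simp; omega)] at h2
    omega
  · intro hjT
    apply Fin.ext
    rw [hval, hval, hfil, if_neg hjT]

lemma blockFn_lt (hT : T ⊆ Finset.Icc 1 (n - 1)) {m m' : ℕ} (hm : m < n) (hm' : m' < n)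
    (h : m < m') (hmem : m' ∈ T) : blockFn n T ⟨m, hm⟩ < blockFn n T ⟨m', hm'⟩ := by
  have h1 := blockFn_val hT ⟨m, hm⟩
  have h2 := blockFn_val hT ⟨m', hm'⟩
  have hlt : (T.filter (· ≤ m)).card < (T.filter (· ≤ m')).card := by
    apply Finset.card_lt_card
    constructor
    · intro x hx
      rw [mem_filter] at hx ⊢
      exact ⟨hx.1, by omega⟩
    · intro hsub
      have : m' ∈ T.filter (· ≤ m') := mem_filter.mpr ⟨hmem, le_refl _⟩
      have := hsub this
      rw [mem_filter] at this
      omega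
  have : ((blockFn n T ⟨m, hm⟩ : Fin n) : ℕ) < ((blockFn n T ⟨m', hm'⟩ : Fin n) : ℕ) := by
    rw [h1, h2]; exact hlt
  exact this

lemma descSet_subset_iff_isAsc (hT : T ⊆ Finset.Icc 1 (n - 1)) (π : Equiv.Perm (Fin n)) :
    descSet n π ⊆ T ↔ IsAsc (blockFn n T) π := by
  constructor
  · intro h i j hij hBij
    set m : ℕ := (j : ℕ) with hm
    have hmIcc : m ∈ Finset.Icc 1 (n - 1) := by
      rw [mem_Icc]
      have := j.isLt
      omega
    have hmT : m ∉ T := (blockFn_step hT hij).mp hBij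
    have hmdesc : m ∉ descSet n π := fun hc => hmT (h hc)
    have hm1 : m - 1 < n := by have := j.isLt; omega
    have hm2 : m < n := j.isLt
    have hnlt : ¬ (π ⟨m, hm2⟩ < π ⟨m - 1, hm1⟩) := by
      intro hc
      exact hmdesc (mem_filter.mpr ⟨hmIcc, fun _ _ => hc⟩)
    have hieq : (⟨m - 1, hm1⟩ : Fin n) = i := by
      apply Fin.ext
      simp
      omega
    have hjeq : (⟨m, hm2⟩ : Fin n) = j := by apply Fin.ext; rfl
    rw [hieq, hjeq] at hnlt
    have hne : π i ≠ π j := fun hc => by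
      have : i = j := π.injective hc
      rw [this] at hij
      omega
    exact lt_of_le_of_ne (not_lt.mp hnlt) hne
  · intro hAsc m hm
    rw [descSet, mem_filter] at hm
    obtain ⟨hmIcc, hlt⟩ := hm
    rw [mem_Icc] at hmIcc
    by_contra hmT
    have hm2 : m < n := by omega
    have hm1 : m - 1 < n := by omega
    set i : Fin n := ⟨m - 1, hm1⟩
    set j : Fin n := ⟨m, hm2⟩
    have hij : (i : ℕ) + 1 = (j : ℕ) := by simp [i, j]; omega
    have hBij : blockFn n T i = blockFn n T j := (blockFn_step hT hij).mpr hmT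
    have h1 : π i < π j := hAsc i j hij hBij
    have h2 : π j < π i := hlt hm1 hm2
    exact absurd h1 (not_lt.mpr h2.le)

/-- `α_n(T)`: number of permutations with descent set contained in `T`. -/
def alphaStat (n : ℕ) (T : Finset ℕ) : ℕ :=
  (univ.filter fun π : Equiv.Perm (Fin n) => descSet n π ⊆ T).card

lemma alphaStat_eq_ascCard (hT : T ⊆ Finset.Icc 1 (n - 1)) :
    alphaStat n T = (univ.filter (IsAsc (blockFn n T))).card := by
  unfold alphaStat
  congr 1
  apply Finset.filter_congr
  intro π _
  simpa using descSet_subset_iff_isAsc hT π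


lemma sum_fib (B : Fin n → Fin n) : ∑ b : Fin n, fib B b = n := by
  unfold fib
  rw [← Finset.card_eq_sum_card_fiberwise (f := B) (t := univ) (fun x _ => mem_univ _),
    card_univ, Fintype.card_fin]

lemma alphaStat_eq_sum (T : Finset ℕ) :
    alphaStat n T = ∑ S ∈ T.powerset, descStat n S := by
  unfold alphaStat
  rw [Finset.card_eq_sum_card_fiberwise (f := descSet n) (t := T.powerset)
    (fun π hπ => mem_powerset.mpr (mem_filter.mp hπ).2)]
  apply Finset.sum_congr rfl
  intro S hS
  unfold descStat
  congr 1
  rw [Finset.filter_filter]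
  apply Finset.filter_congr
  intro π _
  show descSet n π ⊆ T ∧ descSet n π = S ↔ descSet n π = S
  constructor
  · rintro ⟨_, h⟩; exact h
  · rintro rfl; exact ⟨mem_powerset.mp hS, rfl⟩

lemma card_nonempty_fibers (hT : T ⊆ Finset.Icc 1 (n - 1)) (hn : 0 < n) :
    T.card + 1 ≤ (univ.filter fun b : Fin n => fib (blockFn n T) b ≠ 0).card := by
  have h0T : (0 : ℕ) ∉ T := fun h => by have := hT h; rw [mem_Icc] at this; omega
  have hmod : ∀ m ∈ insert 0 T, m % n = m := by
    intro m hm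
    rcases mem_insert.mp hm with rfl | hmT
    · exact Nat.zero_mod n
    · have := hT hmT; rw [mem_Icc] at this; exact Nat.mod_eq_of_lt (by omega)
  have hcard : (insert 0 T).card = T.card + 1 := card_insert_of_notMem h0T
  rw [← hcard]
  apply Finset.card_le_card_of_injOn (fun m => blockFn n T ⟨m % n, Nat.mod_lt m hn⟩)
  · intro m hm
    rw [Finset.mem_coe, mem_filter]
    refine ⟨mem_univ _, ?_⟩
    unfold fib
    apply Finset.card_ne_zero_of_mem (a := ⟨m % n, Nat.mod_lt m hn⟩)
    simp
  · intro m₁ hm₁ m₂ hm₂ heq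
    by_contra hne
    have key : ∀ a b : ℕ, a ∈ insert 0 T → b ∈ insert 0 T → a < b →
        blockFn n T ⟨a % n, Nat.mod_lt a hn⟩ < blockFn n T ⟨b % n, Nat.mod_lt b hn⟩ := by
      intro a b ha hb hab
      have hbT : b ∈ T := by
        rcases mem_insert.mp hb with rfl | h
        · omega
        · exact h
      have ha' : a % n = a := hmod a ha
      have hb' : b % n = b := hmod b hb
      exact blockFn_lt hT (Nat.mod_lt a hn) (Nat.mod_lt b hn)
        (by rw [ha', hb']; exact hab) (by rw [hb']; exact hbT)
    rcases lt_or_gt_of_ne hne with hlt | hgt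
    · exact absurd heq (ne_of_lt (key _ _ hm₁ hm₂ hlt))
    · exact absurd heq.symm (ne_of_lt (key _ _ hm₂ hm₁ hgt))

/-! ### digit sums -/

def s2 (m : ℕ) : ℕ := (Nat.digits 2 m).sum

lemma s2_le (m : ℕ) : s2 m ≤ m := Nat.digit_sum_le 2 m

lemma s2_pos {m : ℕ} (hm : 0 < m) : 0 < s2 m := by
  induction m using Nat.strong_induction_on with
  | _ m IH =>
    unfold s2
    rw [Nat.digits_def' (by norm_num : (1:ℕ) < 2) hm]
    simp only [List.sum_cons]
    rcases Nat.mod_two_eq_zero_or_one m with h | h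
    · have h2 : 0 < m / 2 := by omega
      have := IH (m / 2) (by omega) h2
      unfold s2 at this
      omega
    · omega

lemma s2_factorial (m : ℕ) : (Nat.factorial m).factorization 2 = m - s2 m := by
  haveI : Fact (Nat.Prime 2) := ⟨Nat.prime_two⟩
  have h := sub_one_mul_padicValNat_factorial (p := 2) m
  rw [Nat.factorization_def _ Nat.prime_two]
  simpa [s2] using h

lemma s2_add_le (a b : ℕ) : s2 (a + b) ≤ s2 a + s2 b := by
  have hdvd : a.factorial * b.factorial ∣ (a + b).factorial :=
    Nat.factorial_mul_factorial_dvd_factorial_add a b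
  have hle := (Nat.factorization_le_iff_dvd (by positivity) (Nat.factorial_ne_zero _)).mpr hdvd
  have h2 := hle 2
  rw [Nat.factorization_mul (Nat.factorial_ne_zero _) (Nat.factorial_ne_zero _)] at h2
  simp only [Finsupp.coe_add, Pi.add_apply] at h2
  rw [s2_factorial, s2_factorial, s2_factorial] at h2
  have := s2_le a
  have := s2_le b
  have := s2_le (a + b)
  omega

lemma s2_two_pow (k : ℕ) : s2 (2 ^ k) = 1 := by
  induction k with
  | zero =>
    simp [s2]
  | succ k IH =>
    unfold s2 at IH ⊢
    rw [pow_succ, Nat.digits_def' (by norm_num : (1:ℕ) < 2) (by positivity)]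
    rw [List.sum_cons, Nat.mul_mod_left, Nat.mul_div_cancel _ (by norm_num : (0:ℕ) < 2)]
    omega

lemma le_two_pow_s2 (m : ℕ) : 2 ^ (s2 m) ≤ m + 1 := by
  induction m using Nat.strong_induction_on with
  | _ m IH =>
    rcases Nat.eq_zero_or_pos m with rfl | hm
    · simp [s2]
    · unfold s2
      rw [Nat.digits_def' (by norm_num : (1:ℕ) < 2) hm]
      simp only [List.sum_cons]
      have h2 : m / 2 < m := Nat.div_lt_self hm (by norm_num)
      have IH2 := IH (m / 2) h2
      unfold s2 at IH2
      rw [pow_add]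
      rcases Nat.mod_two_eq_zero_or_one m with h | h
      · rw [h]
        simp only [pow_zero, one_mul]
        omega
      · rw [h]
        simp only [pow_one]
        omega

/-! ### 2-adic valuation of alphaStat -/

lemma two_pow_dvd_alphaStat (hT : T ⊆ Finset.Icc 1 (n - 1)) (hn : 0 < n) :
    2 ^ (T.card + 1 - s2 n) ∣ alphaStat n T := by
  set B := blockFn n T with hBdef
  have hid : Nat.factorial n = alphaStat n T * ∏ b : Fin n, Nat.factorial (fib B b) := by
    rw [alphaStat_eq_ascCard hT]
    exact factorial_eq_asc_mul B blockFn_mono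
  set a := alphaStat n T with hadef
  have ha0 : a ≠ 0 := by
    intro h
    rw [h, zero_mul] at hid
    exact Nat.factorial_ne_zero n hid
  have hprod0 : ∀ b ∈ (univ : Finset (Fin n)), Nat.factorial (fib B b) ≠ 0 :=
    fun b _ => Nat.factorial_ne_zero _
  have hfact : (Nat.factorial n).factorization 2 =
      a.factorization 2 + ∑ b : Fin n, (Nat.factorial (fib B b)).factorization 2 := by
    rw [hid, Nat.factorization_mul ha0 (Finset.prod_ne_zero_iff.mpr hprod0),
      Nat.factorization_prod hprod0]
    simp [Finset.sum_apply']
  rw [s2_factorial] at hfact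
  have hterm : ∀ b ∈ (univ : Finset (Fin n)),
      (Nat.factorial (fib B b)).factorization 2 = fib B b - s2 (fib B b) :=
    fun b _ => s2_factorial _
  rw [Finset.sum_congr rfl hterm] at hfact
  have hsub : ∑ b : Fin n, (fib B b - s2 (fib B b)) =
      (∑ b : Fin n, fib B b) - ∑ b : Fin n, s2 (fib B b) :=
    Finset.sum_tsub_distrib univ (fun b _ => s2_le _)
  rw [hsub, sum_fib] at hfact
  have hG : T.card + 1 ≤ ∑ b : Fin n, s2 (fib B b) := by
    calc T.card + 1 ≤ (univ.filter fun b : Fin n => fib B b ≠ 0).card :=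
          card_nonempty_fibers hT hn
      _ = ∑ b ∈ univ.filter (fun b : Fin n => fib B b ≠ 0), 1 := by
          rw [Finset.card_eq_sum_ones]
      _ ≤ ∑ b ∈ univ.filter (fun b : Fin n => fib B b ≠ 0), s2 (fib B b) := by
          apply Finset.sum_le_sum
          intro b hb
          exact s2_pos (Nat.pos_of_ne_zero (mem_filter.mp hb).2)
      _ ≤ ∑ b : Fin n, s2 (fib B b) := Finset.sum_le_sum_of_subset (filter_subset _ _)
  have hGn : ∑ b : Fin n, s2 (fib B b) ≤ n := by
    calc ∑ b : Fin n, s2 (fib B b) ≤ ∑ b : Fin n, fib B b :=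
          Finset.sum_le_sum (fun b _ => s2_le _)
      _ = n := sum_fib B
  have hsn := s2_le n
  have hexp : T.card + 1 - s2 n ≤ a.factorization 2 := by omega
  exact dvd_trans (pow_dvd_pow 2 hexp) (Nat.ordProj_dvd a 2)


/-! ### Moebius inversion and sum expansion -/

lemma powerset_filter_subset {S T : Finset ℕ} (hT : T ⊆ S) :
    S.powerset.filter (fun R => R ⊆ T) = T.powerset := by
  ext R
  simp only [mem_filter, mem_powerset]
  exact ⟨fun h => h.2, fun h => ⟨h.trans hT, h⟩⟩

lemma sign_sum_interval {S R : Finset ℕ} (hR : R ⊆ S) :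
    ∑ T ∈ S.powerset.filter (fun T => R ⊆ T), (-1 : ℤ) ^ ((S \ T).card) =
      if R = S then 1 else 0 := by
  have hbij : ∑ T ∈ S.powerset.filter (fun T => R ⊆ T), (-1 : ℤ) ^ ((S \ T).card) =
      ∑ U ∈ (S \ R).powerset, (-1 : ℤ) ^ U.card := by
    apply Finset.sum_nbij' (i := fun T => S \ T) (j := fun U => S \ U)
    · intro T hT
      rw [mem_filter, mem_powerset] at hT
      rw [mem_powerset]
      exact sdiff_subset_sdiff (le_refl S) hT.2
    · intro U hU
      rw [mem_powerset] at hU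
      rw [mem_filter, mem_powerset]
      constructor
      · exact sdiff_subset
      · intro x hx
        rw [mem_sdiff]
        have hxS : x ∈ S := hR hx
        refine ⟨hxS, fun hc => ?_⟩
        have := hU hc
        rw [mem_sdiff] at this
        exact this.2 hx
    · intro T hT
      rw [mem_filter, mem_powerset] at hT
      exact Finset.sdiff_sdiff_eq_self hT.1
    · intro U hU
      rw [mem_powerset] at hU
      exact Finset.sdiff_sdiff_eq_self (hU.trans sdiff_subset)
    · intro T _
      rfl
  rw [hbij, Finset.sum_powerset_neg_one_pow_card]
  congr 1
  simp only [Finset.sdiff_eq_empty_iff_subset, eq_iff_iff]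
  exact ⟨fun h => le_antisymm hR h, fun h => h ▸ le_refl _⟩

lemma descStat_eq_alternating (S : Finset ℕ) :
    (descStat n S : ℤ) = ∑ T ∈ S.powerset, (-1 : ℤ) ^ ((S \ T).card) * (alphaStat n T : ℤ) := by
  have hα : ∀ T : Finset ℕ, (alphaStat n T : ℤ) = ∑ R ∈ T.powerset, (descStat n R : ℤ) := by
    intro T
    rw [alphaStat_eq_sum]
    push_cast
    rfl
  have step1 : ∑ T ∈ S.powerset, (-1 : ℤ) ^ ((S \ T).card) * (alphaStat n T : ℤ)
      = ∑ T ∈ S.powerset, ∑ R ∈ S.powerset,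
          (if R ⊆ T then (-1 : ℤ) ^ ((S \ T).card) * (descStat n R : ℤ) else 0) := by
    apply Finset.sum_congr rfl
    intro T hT
    rw [hα, Finset.mul_sum, ← Finset.sum_filter, powerset_filter_subset (mem_powerset.mp hT)]
  rw [step1, Finset.sum_comm]
  have step2 : ∀ R ∈ S.powerset,
      ∑ T ∈ S.powerset, (if R ⊆ T then (-1 : ℤ) ^ ((S \ T).card) * (descStat n R : ℤ) else 0)
        = (if R = S then 1 else 0) * (descStat n R : ℤ) := by
    intro R hR
    rw [← Finset.sum_filter, ← Finset.sum_mul, sign_sum_interval (mem_powerset.mp hR)]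
  rw [Finset.sum_congr rfl step2]
  have : ∀ R ∈ S.powerset, (if R = S then 1 else 0) * (descStat n R : ℤ)
      = if R = S then (descStat n R : ℤ) else 0 := by
    intro R _
    split_ifs <;> ring
  rw [Finset.sum_congr rfl this, Finset.sum_ite_eq' S.powerset S (fun R => (descStat n R : ℤ)),
    if_pos (mem_powerset.mpr (le_refl S))]

lemma ite_mul_ite {S T T' : Finset ℕ} (a b : ℤ) :
    (if T ⊆ S then a else 0) * (if T' ⊆ S then b else 0) =
      if T ∪ T' ⊆ S then a * b else 0 := by
  by_cases h1 : T ⊆ S <;> by_cases h2 : T' ⊆ S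
  · rw [if_pos h1, if_pos h2, if_pos (Finset.union_subset h1 h2)]
  · rw [if_pos h1, if_neg h2, if_neg (fun hc => h2 ((Finset.union_subset_iff.mp hc).2)), mul_zero]
  · rw [if_neg h1, if_pos h2, if_neg (fun hc => h1 ((Finset.union_subset_iff.mp hc).1)), zero_mul]
  · rw [if_neg h1, if_neg h2, if_neg (fun hc => h1 ((Finset.union_subset_iff.mp hc).1)), zero_mul]

lemma powSumDes_expansion :
    (powSumDes 2 n : ℤ) =
      ∑ T ∈ (Finset.Icc 1 (n - 1)).powerset, ∑ T' ∈ (Finset.Icc 1 (n - 1)).powerset,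
        (-1 : ℤ) ^ (T.card + T'.card) * (alphaStat n T : ℤ) * (alphaStat n T' : ℤ)
          * 2 ^ ((n - 1) - (T ∪ T').card) := by
  set P := (Finset.Icc 1 (n - 1)).powerset with hP
  set γ : Finset ℕ → ℤ := fun S => ∑ T ∈ S.powerset, (-1 : ℤ) ^ T.card * (alphaStat n T : ℤ)
    with hγ
  have hβγ : ∀ S ∈ P, (descStat n S : ℤ) ^ 2 = (γ S) ^ 2 := by
    intro S _
    have h1 : (descStat n S : ℤ) = (-1 : ℤ) ^ S.card * γ S := by
      rw [descStat_eq_alternating, hγ, Finset.mul_sum]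
      apply Finset.sum_congr rfl
      intro T hT
      rw [mem_powerset] at hT
      have hc : (S \ T).card + T.card = S.card := Finset.card_sdiff_add_card_eq_card hT
      have : (-1 : ℤ) ^ S.card = (-1 : ℤ) ^ ((S \ T).card) * (-1 : ℤ) ^ T.card := by
        rw [← pow_add, hc]
      have h2 : ((-1 : ℤ) ^ T.card) ^ 2 = 1 := by
        rw [← pow_mul, mul_comm, pow_mul]
        norm_num
      calc (-1 : ℤ) ^ ((S \ T).card) * (alphaStat n T : ℤ)
          = (-1 : ℤ) ^ ((S \ T).card) * (((-1 : ℤ) ^ T.card) ^ 2 * (alphaStat n T : ℤ)) := by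
            rw [h2, one_mul]
        _ = (-1 : ℤ) ^ S.card * ((-1 : ℤ) ^ T.card * (alphaStat n T : ℤ)) := by
            rw [this]; ring
    rw [h1, mul_pow, ← pow_mul, mul_comm S.card 2, pow_mul]
    norm_num
  have hpow : (powSumDes 2 n : ℤ) = ∑ S ∈ P, (γ S) ^ 2 := by
    unfold powSumDes
    push_cast
    exact Finset.sum_congr rfl hβγ
  have hγ2 : ∀ S ∈ P, γ S = ∑ T ∈ P, (if T ⊆ S then (-1 : ℤ) ^ T.card * (alphaStat n T : ℤ)
      else 0) := by
    intro S hS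
    rw [hγ, ← Finset.sum_filter, powerset_filter_subset (mem_powerset.mp hS)]
  have hexp : ∀ S ∈ P, (γ S) ^ 2 = ∑ T ∈ P, ∑ T' ∈ P,
      (if T ∪ T' ⊆ S then (-1 : ℤ) ^ (T.card + T'.card) * (alphaStat n T : ℤ)
        * (alphaStat n T' : ℤ) else 0) := by
    intro S hS
    rw [sq, hγ2 S hS, Finset.sum_mul_sum]
    apply Finset.sum_congr rfl
    intro T _
    apply Finset.sum_congr rfl
    intro T' _
    rw [ite_mul_ite]
    exact if_congr Iff.rfl (by rw [pow_add]; ring) rfl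
  rw [hpow, Finset.sum_congr rfl hexp, Finset.sum_comm]
  apply Finset.sum_congr rfl
  intro T hT
  rw [Finset.sum_comm]
  apply Finset.sum_congr rfl
  intro T' hT'
  have hsub : T ∪ T' ⊆ Finset.Icc 1 (n - 1) :=
    Finset.union_subset (mem_powerset.mp hT) (mem_powerset.mp hT')
  have hfil : P.filter (fun S => T ∪ T' ⊆ S) = Finset.Icc (T ∪ T') (Finset.Icc 1 (n - 1)) := by
    ext S
    rw [mem_filter, Finset.mem_Icc, hP, mem_powerset]
    exact ⟨fun h => ⟨h.2, h.1⟩, fun h => ⟨h.2, h.1⟩⟩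
  rw [← Finset.sum_filter, hfil, Finset.sum_const, Finset.card_Icc_finset hsub]
  rw [Nat.card_Icc, nsmul_eq_mul]
  push_cast
  ring


/-! ### final arithmetic -/

lemma two_mul_le_two_pow (m : ℕ) : 2 * m ≤ 2 ^ m := by
  induction m with
  | zero => norm_num
  | succ m IH =>
    rcases Nat.eq_zero_or_pos m with rfl | hm
    · norm_num
    have h1 : (2:ℕ) ≤ 2 ^ m := by
      calc (2:ℕ) = 2 ^ 1 := (pow_one 2).symm
      _ ≤ 2 ^ m := Nat.pow_le_pow_right (by norm_num) hm
    have : 2 ^ (m + 1) = 2 ^ m + 2 ^ m := by rw [pow_succ]; ring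
    omega

lemma diag_exp {M n s sd D t u : ℕ} (hM2 : 2 ≤ M) (h1 : M ≤ n) (hs1 : 1 ≤ s)
    (hsA : s ≤ sd + 1) (hsC : 2 * sd ≤ D) (hsB : D ≤ n - M + 1) (ht : t ≤ n - 1) (hu : u = t) :
    M - 1 ≤ (t + 1 - s) + (t + 1 - s) + ((n - 1) - u) := by omega

lemma offdiag_exp {M n s sd D t t' u : ℕ} (hM2 : 2 ≤ M) (h1 : M ≤ n) (hs1 : 1 ≤ s)
    (hsA : s ≤ sd + 1) (hsC : 2 * sd ≤ D) (hsB : D ≤ n - M + 1) (ht : t ≤ n - 1)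
    (ht' : t' ≤ n - 1) (hu1 : u ≤ t + t') (hu2 : u ≤ n - 1) :
    M - 2 ≤ (t + 1 - s) + (t' + 1 - s) + ((n - 1) - u) := by omega

lemma exp_facts {k n : ℕ} (hk : 1 ≤ k) (h1 : 2 ^ k ≤ n) (h2 : n ≤ 2 ^ (k + 1) - 1) :
    1 ≤ s2 n ∧ s2 n ≤ s2 (n - 2 ^ k) + 1 ∧ 2 * s2 (n - 2 ^ k) ≤ 2 ^ (s2 (n - 2 ^ k)) ∧
      2 ^ (s2 (n - 2 ^ k)) ≤ (n - 2 ^ k) + 1 := by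
  have hn : 0 < n := lt_of_lt_of_le (by positivity) h1
  refine ⟨s2_pos hn, ?_, two_mul_le_two_pow _, le_two_pow_s2 _⟩
  have heq : 2 ^ k + (n - 2 ^ k) = n := Nat.add_sub_cancel' h1
  have := s2_add_le (2 ^ k) (n - 2 ^ k)
  rw [heq, s2_two_pow] at this
  omega

lemma term_dvd {T T' : Finset ℕ} (hT : T ⊆ Finset.Icc 1 (n - 1)) (hT' : T' ⊆ Finset.Icc 1 (n - 1))
    (hn : 0 < n) :
    (2 : ℤ) ^ ((T.card + 1 - s2 n) + (T'.card + 1 - s2 n) + ((n - 1) - (T ∪ T').card)) ∣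
      (-1 : ℤ) ^ (T.card + T'.card) * (alphaStat n T : ℤ) * (alphaStat n T' : ℤ)
        * 2 ^ ((n - 1) - (T ∪ T').card) := by
  have hd1 : (2 : ℤ) ^ (T.card + 1 - s2 n) ∣ (alphaStat n T : ℤ) := by
    have := two_pow_dvd_alphaStat hT hn
    exact_mod_cast Int.natCast_dvd_natCast.mpr this
  have hd2 : (2 : ℤ) ^ (T'.card + 1 - s2 n) ∣ (alphaStat n T' : ℤ) := by
    have := two_pow_dvd_alphaStat hT' hn
    exact_mod_cast Int.natCast_dvd_natCast.mpr this
  rw [pow_add, pow_add]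
  have h3 : (2 : ℤ) ^ (T.card + 1 - s2 n) * 2 ^ (T'.card + 1 - s2 n)
      * 2 ^ ((n - 1) - (T ∪ T').card) ∣
      (alphaStat n T : ℤ) * (alphaStat n T' : ℤ) * 2 ^ ((n - 1) - (T ∪ T').card) :=
    mul_dvd_mul (mul_dvd_mul hd1 hd2) dvd_rfl
  calc (2 : ℤ) ^ (T.card + 1 - s2 n) * 2 ^ (T'.card + 1 - s2 n) * 2 ^ ((n - 1) - (T ∪ T').card)
      ∣ (alphaStat n T : ℤ) * (alphaStat n T' : ℤ) * 2 ^ ((n - 1) - (T ∪ T').card) := h3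
    _ ∣ (-1 : ℤ) ^ (T.card + T'.card) * (alphaStat n T : ℤ) * (alphaStat n T' : ℤ)
        * 2 ^ ((n - 1) - (T ∪ T').card) := by
        exact ⟨(-1 : ℤ) ^ (T.card + T'.card), by ring⟩

lemma c_symm {T T' : Finset ℕ} :
    (-1 : ℤ) ^ (T'.card + T.card) * (alphaStat n T' : ℤ) * (alphaStat n T : ℤ)
        * 2 ^ ((n - 1) - (T' ∪ T).card) =
      (-1 : ℤ) ^ (T.card + T'.card) * (alphaStat n T : ℤ) * (alphaStat n T' : ℤ)
        * 2 ^ ((n - 1) - (T ∪ T').card) := by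
  rw [add_comm T'.card, Finset.union_comm]
  ring

end Stmt18Aux

theorem stmt18 (k n : ℕ) (h1 : 2 ^ k ≤ n) (h2 : n ≤ 2 ^ (k + 1) - 1) :
    2 ^ (2 ^ k - 1) ∣ powSumDes 2 n := by
  classical
  rcases Nat.eq_zero_or_pos k with rfl | hk
  · norm_num
  open Stmt18Aux Finset in
  have hM2 : 2 ≤ 2 ^ k := by
    calc 2 = 2 ^ 1 := (pow_one 2).symm
    _ ≤ 2 ^ k := Nat.pow_le_pow_right (by norm_num) hk
  have hn : 0 < n := lt_of_lt_of_le (by positivity) h1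
  obtain ⟨hs1, hsA, hsC, hsB⟩ := Stmt18Aux.exp_facts hk h1 h2
  rw [← Int.natCast_dvd_natCast]
  push_cast
  rw [Stmt18Aux.powSumDes_expansion, ← Finset.sum_product']
  set P := (Finset.Icc 1 (n - 1)).powerset with hP
  set c : Finset ℕ × Finset ℕ → ℤ := fun p =>
    (-1 : ℤ) ^ (p.1.card + p.2.card) * (Stmt18Aux.alphaStat n p.1 : ℤ)
      * (Stmt18Aux.alphaStat n p.2 : ℤ) * 2 ^ ((n - 1) - (p.1 ∪ p.2).card) with hc
  show (2 : ℤ) ^ (2 ^ k - 1) ∣ ∑ p ∈ P ×ˢ P, c p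
  have hcard : ∀ {T : Finset ℕ}, T ∈ P → T.card ≤ n - 1 := by
    intro T hT
    have := Finset.card_le_card (Finset.mem_powerset.mp hT)
    rwa [Nat.card_Icc, Nat.add_sub_cancel] at this
  -- split into diagonal and off-diagonal parts
  rw [← Finset.sum_filter_add_sum_filter_not (P ×ˢ P) (fun p => p.1 = p.2) c]
  apply dvd_add
  · -- diagonal part
    apply Finset.dvd_sum
    intro p hp
    rw [Finset.mem_filter, Finset.mem_product] at hp
    obtain ⟨⟨hp1, hp2⟩, hdiag⟩ := hp
    obtain ⟨T, T'⟩ := p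
    simp only at hdiag hp1 hp2
    subst hdiag
    have hsub : T ⊆ Finset.Icc 1 (n - 1) := Finset.mem_powerset.mp hp1
    have hd := Stmt18Aux.term_dvd (n := n) hsub hsub hn
    have hu : (T ∪ T).card = T.card := by rw [Finset.union_self]
    have ht := hcard hp1
    have hexp : 2 ^ k - 1 ≤ (T.card + 1 - s2 n) + (T.card + 1 - s2 n)
        + ((n - 1) - (T ∪ T).card) :=
      Stmt18Aux.diag_exp hM2 h1 hs1 hsA hsC (by omega) ht hu
    refine dvd_trans (pow_dvd_pow 2 hexp) ?_
    simp only [hc]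
    exact hd
  · -- off-diagonal part
    set Q := (P ×ˢ P).filter (fun p => ¬ p.1 = p.2) with hQ
    set Blt := Q.filter (fun p => toColex p.1 < toColex p.2) with hB
    have hswap : ∑ p ∈ Q.filter (fun p => ¬ toColex p.1 < toColex p.2), c p =
        ∑ p ∈ Blt, c p := by
      apply Finset.sum_nbij' (i := Prod.swap) (j := Prod.swap)
      · intro p hp
        simp only [hQ, Finset.mem_filter, Finset.mem_product] at hp
        simp only [hB, hQ, Finset.mem_filter, Finset.mem_product, Prod.fst_swap, Prod.snd_swap]
        obtain ⟨⟨⟨hpa, hpb⟩, hne⟩, hnlt⟩ := hp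
        refine ⟨⟨⟨hpb, hpa⟩, fun h => hne h.symm⟩, ?_⟩
        have hne' : toColex p.1 ≠ toColex p.2 := fun h =>
          hne (toColex.injective h)
        rcases lt_or_gt_of_ne hne' with h | h
        · exact absurd h hnlt
        · exact h
      · intro p hp
        simp only [hB, hQ, Finset.mem_filter, Finset.mem_product] at hp
        simp only [hQ, Finset.mem_filter, Finset.mem_product, Prod.fst_swap, Prod.snd_swap]
        obtain ⟨⟨⟨hpa, hpb⟩, hne⟩, hlt⟩ := hp
        exact ⟨⟨⟨hpb, hpa⟩, fun h => hne h.symm⟩, not_lt.mpr hlt.le⟩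
      · intro p _; exact Prod.swap_swap p
      · intro p _; exact Prod.swap_swap p
      · intro p _
        simp only [hc, Prod.fst_swap, Prod.snd_swap]
        exact Stmt18Aux.c_symm.symm
    rw [← Finset.sum_filter_add_sum_filter_not Q (fun p => toColex p.1 < toColex p.2) c,
      hswap, ← hB, ← two_mul]
    have h2M : (2 : ℤ) ^ (2 ^ k - 1) = 2 * 2 ^ (2 ^ k - 2) := by
      rw [← pow_succ']
      congr 1
      omega
    rw [h2M]
    apply mul_dvd_mul_left
    apply Finset.dvd_sum
    intro p hp
    rw [hB, hQ, Finset.mem_filter, Finset.mem_filter, Finset.mem_product] at hp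
    obtain ⟨⟨⟨hpa, hpb⟩, _⟩, _⟩ := hp
    obtain ⟨T, T'⟩ := p
    simp only at hpa hpb
    have hsub1 : T ⊆ Finset.Icc 1 (n - 1) := Finset.mem_powerset.mp hpa
    have hsub2 : T' ⊆ Finset.Icc 1 (n - 1) := Finset.mem_powerset.mp hpb
    have hd := Stmt18Aux.term_dvd (n := n) hsub1 hsub2 hn
    have ht := hcard hpa
    have ht' := hcard hpb
    have hu1 : (T ∪ T').card ≤ T.card + T'.card := Finset.card_union_le _ _
    have hu2 : (T ∪ T').card ≤ n - 1 := by
      have := Finset.card_le_card (Finset.union_subset hsub1 hsub2)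
      rwa [Nat.card_Icc, Nat.add_sub_cancel] at this
    have hexp : 2 ^ k - 2 ≤ (T.card + 1 - s2 n) + (T'.card + 1 - s2 n)
        + ((n - 1) - (T ∪ T').card) :=
      Stmt18Aux.offdiag_exp hM2 h1 hs1 hsA hsC (by omega) ht ht' hu1 hu2
    refine dvd_trans (pow_dvd_pow 2 hexp) ?_
    simp only [hc]
    exact hd
end
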